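/- arXiv:1111.3609 — 3 statements merged into one kernel-verified Lean document; each statement's English description precedes it below -/
import Mathlib

section
/- Let p ≥ 5 be prime, b ∈ ℤ_p, and φ(x,y) = (y, x + y² + b). Suppose Q ∈ ℚ_p² is a periodic point of φ of exact period N. Then Q ∈ ℤ_p², and if M is the exact period of the reduction Q̃ ∈ 𝔽_p² under the reduced map φ̃, and r is the order of the multiplier matrix Λ(Q̃) = ∏_{i=0}^{M−1} J_{φ̃}(φ̃^{M−1−i}(Q̃)) in SL₂(𝔽_p), then N = dM for some divisor d of r. -/
set_option linter.unreachableTactic false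
set_option linter.unusedTactic false
set_option linter.unnecessarySeqFocus false
set_option maxHeartbeats 1000000

namespace Stmt15Aux

variable {p : ℕ} [Fact p.Prime]

/-- The Hénon map over the p-adic integers. -/
noncomputable def Phi (b : ℤ_[p]) (P : ℤ_[p] × ℤ_[p]) : ℤ_[p] × ℤ_[p] := (P.2, P.1 + P.2 ^ 2 + b)

/-- Jacobian of `Phi`. -/
noncomputable def JP (P : ℤ_[p] × ℤ_[p]) : Matrix (Fin 2) (Fin 2) ℤ_[p] := !![0, 1; 1, 2 * P.2]

/-- Jacobian of the n-th iterate (chain rule). -/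
noncomputable def Jn (b : ℤ_[p]) : ℕ → (ℤ_[p] × ℤ_[p]) → Matrix (Fin 2) (Fin 2) ℤ_[p]
  | 0, _ => 1
  | n + 1, P => Jn b n (Phi b P) * JP P

/-- Action of a 2×2 matrix on a pair. -/
def act {R : Type*} [CommRing R] (A : Matrix (Fin 2) (Fin 2) R) (v : R × R) : R × R :=
  (A 0 0 * v.1 + A 0 1 * v.2, A 1 0 * v.1 + A 1 1 * v.2)

/-- Scalar multiplication on pairs. -/
def sm {R : Type*} [CommRing R] (c : R) (v : R × R) : R × R := (c * v.1, c * v.2)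

/-- Componentwise divisibility. -/
def dd {R : Type*} [CommRing R] (c : R) (v : R × R) : Prop := c ∣ v.1 ∧ c ∣ v.2

/-- Taylor remainder of the n-th iterate. -/
noncomputable def Rn (b : ℤ_[p]) (n : ℕ) (P h : ℤ_[p] × ℤ_[p]) : ℤ_[p] × ℤ_[p] :=
  (Phi b)^[n] (P + h) - (Phi b)^[n] P - act (Jn b n P) h

section basic
variable {R : Type*} [CommRing R]

lemma act_one (v : R × R) : act (1 : Matrix (Fin 2) (Fin 2) R) v = v := by
  simp [act, Matrix.one_apply]

lemma act_zero (A : Matrix (Fin 2) (Fin 2) R) : act A (0 : R × R) = 0 := by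
  simp [act, Prod.ext_iff]

lemma act_add (A : Matrix (Fin 2) (Fin 2) R) (v w : R × R) :
    act A (v + w) = act A v + act A w := by
  simp only [act, Prod.fst_add, Prod.snd_add, Prod.mk.injEq]
  first
    | (constructor <;> ring)
    | (refine Prod.ext ?_ ?_ <;> simp <;> ring)

lemma act_sub (A : Matrix (Fin 2) (Fin 2) R) (v w : R × R) :
    act A (v - w) = act A v - act A w := by
  simp only [act, Prod.fst_sub, Prod.snd_sub, Prod.mk.injEq]
  first
    | (constructor <;> ring)
    | (refine Prod.ext ?_ ?_ <;> simp <;> ring)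

lemma act_matadd (A B : Matrix (Fin 2) (Fin 2) R) (v : R × R) :
    act (A + B) v = act A v + act B v := by
  simp only [act, Matrix.add_apply, Prod.mk.injEq]
  first
    | (constructor <;> ring)
    | (refine Prod.ext ?_ ?_ <;> simp <;> ring)

lemma act_mulmat (A B : Matrix (Fin 2) (Fin 2) R) (v : R × R) :
    act (A * B) v = act A (act B v) := by
  simp only [act, Matrix.mul_apply, Fin.sum_univ_two, Prod.mk.injEq]
  first
    | (constructor <;> ring)
    | (refine Prod.ext ?_ ?_ <;> simp <;> ring)

lemma act_sm (A : Matrix (Fin 2) (Fin 2) R) (c : R) (v : R × R) :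
    act A (sm c v) = sm c (act A v) := by
  simp only [act, sm, Prod.mk.injEq]
  first
    | (constructor <;> ring)
    | (refine Prod.ext ?_ ?_ <;> simp <;> ring)

lemma sm_add (c : R) (v w : R × R) : sm c (v + w) = sm c v + sm c w := by
  simp only [sm, Prod.fst_add, Prod.snd_add, Prod.mk.injEq]
  first
    | (constructor <;> ring)
    | (refine Prod.ext ?_ ?_ <;> simp <;> ring)

lemma sm_sub (c : R) (v w : R × R) : sm c (v - w) = sm c v - sm c w := by
  simp only [sm, Prod.fst_sub, Prod.snd_sub, Prod.mk.injEq]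
  first
    | (constructor <;> ring)
    | (refine Prod.ext ?_ ?_ <;> simp <;> ring)

lemma add_sm (c e : R) (v : R × R) : sm (c + e) v = sm c v + sm e v := by
  simp only [sm, Prod.mk.injEq]
  first
    | (constructor <;> ring)
    | (refine Prod.ext ?_ ?_ <;> simp <;> ring)

lemma sm_sm (c e : R) (v : R × R) : sm c (sm e v) = sm (c * e) v := by
  simp only [sm, Prod.mk.injEq]
  first
    | (constructor <;> ring)
    | (refine Prod.ext ?_ ?_ <;> simp <;> ring)

lemma sm_one (v : R × R) : sm (1 : R) v = v := by simp [sm]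

lemma sm_zero_v (c : R) : sm c (0 : R × R) = 0 := by simp [sm, Prod.ext_iff]

lemma sm_zero_c (v : R × R) : sm (0 : R) v = 0 := by simp [sm, Prod.ext_iff]

lemma dd_zero (c : R) : dd c (0 : R × R) := ⟨dvd_zero _, dvd_zero _⟩

lemma dd_add {c : R} {v w : R × R} (hv : dd c v) (hw : dd c w) : dd c (v + w) :=
  ⟨dvd_add hv.1 hw.1, dvd_add hv.2 hw.2⟩

lemma dd_sub {c : R} {v w : R × R} (hv : dd c v) (hw : dd c w) : dd c (v - w) :=
  ⟨dvd_sub hv.1 hw.1, dvd_sub hv.2 hw.2⟩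

lemma dd_neg {c : R} {v : R × R} (hv : dd c v) : dd c (-v) :=
  ⟨dvd_neg.2 hv.1, dvd_neg.2 hv.2⟩

lemma dd_mono {c e : R} {v : R × R} (h : e ∣ c) (hv : dd c v) : dd e v :=
  ⟨h.trans hv.1, h.trans hv.2⟩

lemma dd_sm {c : R} (e : R) {v : R × R} (hv : dd c v) : dd c (sm e v) :=
  ⟨Dvd.dvd.mul_left hv.1 e, Dvd.dvd.mul_left hv.2 e⟩

lemma dd_sm' {c : R} (e : R) {v : R × R} (hv : dd c v) : dd (e * c) (sm e v) :=
  ⟨mul_dvd_mul_left e hv.1, mul_dvd_mul_left e hv.2⟩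

lemma dd_act {c : R} (A : Matrix (Fin 2) (Fin 2) R) {v : R × R} (hv : dd c v) :
    dd c (act A v) :=
  ⟨dvd_add (hv.1.mul_left _) (hv.2.mul_left _), dvd_add (hv.1.mul_left _) (hv.2.mul_left _)⟩

lemma dd_act_mat {c e : R} {A : Matrix (Fin 2) (Fin 2) R} (hA : ∀ i j, c ∣ A i j)
    {v : R × R} (hv : dd e v) : dd (c * e) (act A v) := by
  refine ⟨dvd_add ?_ ?_, dvd_add ?_ ?_⟩ <;>
    exact mul_dvd_mul (hA _ _) (by first | exact hv.1 | exact hv.2)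

end basic

/-- quadratic part of `Phi`. -/
def qq {R : Type*} [CommRing R] (h : R × R) : R × R := (0, h.2 ^ 2)

/-- first-order difference of `Phi`. -/
noncomputable def uu (P h : ℤ_[p] × ℤ_[p]) : ℤ_[p] × ℤ_[p] := act (JP P) h + qq h

lemma Phi_expand (b : ℤ_[p]) (P h : ℤ_[p] × ℤ_[p]) :
    Phi b (P + h) = Phi b P + uu P h := by
  simp only [Phi, uu, act, JP, qq]
  refine Prod.ext ?_ ?_ <;>
    simp [Matrix.cons_val_zero, Matrix.cons_val_one] <;> ring

lemma Rn_spec (b : ℤ_[p]) (n : ℕ) (P h : ℤ_[p] × ℤ_[p]) :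
    (Phi b)^[n] (P + h) = (Phi b)^[n] P + (act (Jn b n P) h + Rn b n P h) := by
  simp only [Rn]; abel

lemma Rn_zero (b : ℤ_[p]) (P h : ℤ_[p] × ℤ_[p]) : Rn b 0 P h = 0 := by
  simp [Rn, Jn, act_one]

lemma Rn_zero_h (b : ℤ_[p]) (n : ℕ) (P : ℤ_[p] × ℤ_[p]) : Rn b n P 0 = 0 := by
  simp [Rn, act_zero]

lemma Rn_succ (b : ℤ_[p]) (n : ℕ) (P h : ℤ_[p] × ℤ_[p]) :
    Rn b (n + 1) P h = act (Jn b n (Phi b P)) (qq h) + Rn b n (Phi b P) (uu P h) := by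
  have e1 : (Phi b)^[n + 1] (P + h) = (Phi b)^[n] (Phi b P + uu P h) := by
    rw [Function.iterate_succ_apply, Phi_expand]
  have e2 : (Phi b)^[n+1] P = (Phi b)^[n] (Phi b P) := Function.iterate_succ_apply _ _ _
  rw [Rn, e1, e2, Rn_spec b n (Phi b P) (uu P h)]
  have e3 : act (Jn b (n+1) P) h = act (Jn b n (Phi b P)) (act (JP P) h) := by
    rw [show Jn b (n+1) P = Jn b n (Phi b P) * JP P from rfl, act_mulmat]
  rw [e3]
  have e4 : act (Jn b n (Phi b P)) (uu P h)
      = act (Jn b n (Phi b P)) (act (JP P) h) + act (Jn b n (Phi b P)) (qq h) := by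
    rw [uu, act_add]
  rw [e4]; abel

lemma dd_qq {c : ℤ_[p]} {h : ℤ_[p] × ℤ_[p]} (hc : dd c h) : dd (c ^ 2) (qq h) :=
  ⟨dvd_zero _, pow_dvd_pow_of_dvd hc.2 2⟩

lemma dd_uu {c : ℤ_[p]} (P : ℤ_[p] × ℤ_[p]) {h : ℤ_[p] × ℤ_[p]} (hc : dd c h) :
    dd c (uu P h) :=
  dd_add (dd_act _ hc) (dd_mono (dvd_pow_self c (by norm_num)) (dd_qq hc))

lemma qq_sub (h h' : ℤ_[p] × ℤ_[p]) :
    qq h - qq h' = (0, (h.2 - h'.2) * (h.2 + h'.2)) := by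
  simp only [qq, Prod.mk_sub_mk]
  refine Prod.ext ?_ ?_ <;> simp <;> ring

lemma dd_qq_sub {c e : ℤ_[p]} {h h' : ℤ_[p] × ℤ_[p]} (hc : dd c h) (hc' : dd c h')
    (he : dd e (h - h')) : dd (c * e) (qq h - qq h') := by
  rw [qq_sub]
  refine ⟨dvd_zero _, ?_⟩
  rw [mul_comm c e]
  have h1 : e ∣ h.2 - h'.2 := by simpa using he.2
  exact mul_dvd_mul h1 (dvd_add hc.2 hc'.2)

lemma dd_uu_sub {e : ℤ_[p]} (P : ℤ_[p] × ℤ_[p]) {h h' : ℤ_[p] × ℤ_[p]}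
    (he : dd e (h - h')) : dd e (uu P h - uu P h') := by
  have hkey : uu P h - uu P h' = act (JP P) (h - h') + (qq h - qq h') := by
    simp only [uu]; rw [act_sub]; abel
  rw [hkey]
  refine dd_add (dd_act _ he) ?_
  rw [qq_sub]
  refine ⟨dvd_zero _, ?_⟩
  have h1 : e ∣ h.2 - h'.2 := by simpa using he.2
  exact h1.mul_right _

lemma qq_sm (μ : ℤ_[p]) (h : ℤ_[p] × ℤ_[p]) : qq (sm μ h) = sm (μ ^ 2) (qq h) := by
  simp only [qq, sm]
  refine Prod.ext ?_ ?_ <;> simp <;> ring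

lemma uu_sm_err (P : ℤ_[p] × ℤ_[p]) (μ : ℤ_[p]) (h : ℤ_[p] × ℤ_[p]) :
    uu P (sm μ h) = sm μ (uu P h) + sm (μ ^ 2 - μ) (qq h) := by
  simp only [uu, act_sm, qq_sm]
  have h1 : sm μ (act (JP P) h + qq h) = sm μ (act (JP P) h) + sm μ (qq h) := sm_add _ _ _
  rw [h1]
  have h2 : sm (μ ^ 2 - μ) (qq h) = sm (μ ^ 2) (qq h) - sm μ (qq h) := by
    have := add_sm (μ ^ 2 - μ) μ (qq h)
    rw [sub_add_cancel] at this
    rw [this]; abel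
  rw [h2]; abel

theorem E1 (b : ℤ_[p]) : ∀ (n : ℕ) (P h h' : ℤ_[p] × ℤ_[p]) (c e : ℤ_[p]),
    dd c h → dd c h' → dd e (h - h') → dd (c * e) (Rn b n P h - Rn b n P h') := by
  intro n
  induction n with
  | zero => intro P h h' c e _ _ _; simp only [Rn_zero, sub_zero]; exact dd_zero _
  | succ n ih =>
    intro P h h' c e hc hc' he
    have expand : Rn b (n+1) P h - Rn b (n+1) P h'
        = act (Jn b n (Phi b P)) (qq h - qq h')
          + (Rn b n (Phi b P) (uu P h) - Rn b n (Phi b P) (uu P h')) := by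
      rw [Rn_succ, Rn_succ, act_sub]; abel
    rw [expand]
    refine dd_add (dd_act _ (dd_qq_sub hc hc' he)) ?_
    exact ih (Phi b P) (uu P h) (uu P h') c e (dd_uu P hc) (dd_uu P hc') (dd_uu_sub P he)

theorem E2 (b : ℤ_[p]) : ∀ (n : ℕ) (P h : ℤ_[p] × ℤ_[p]) (c μ : ℤ_[p]),
    dd c h → dd (c ^ 3) (Rn b n P (sm μ h) - sm (μ ^ 2) (Rn b n P h)) := by
  intro n
  induction n with
  | zero =>
    intro P h c μ _
    simp only [Rn_zero, sm_zero_v, sub_zero]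
    exact dd_zero _
  | succ n ih =>
    intro P h c μ hc
    have key : Rn b (n+1) P (sm μ h) - sm (μ ^ 2) (Rn b (n+1) P h)
        = (Rn b n (Phi b P) (uu P (sm μ h)) - Rn b n (Phi b P) (sm μ (uu P h)))
          + (Rn b n (Phi b P) (sm μ (uu P h)) - sm (μ ^ 2) (Rn b n (Phi b P) (uu P h))) := by
      rw [Rn_succ, Rn_succ, sm_add, qq_sm, act_sm]
      abel
    rw [key]
    have t2 : dd (c ^ 3)
        (Rn b n (Phi b P) (sm μ (uu P h)) - sm (μ ^ 2) (Rn b n (Phi b P) (uu P h))) :=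
      ih (Phi b P) (uu P h) c μ (dd_uu P hc)
    have t1 : dd (c ^ 3)
        (Rn b n (Phi b P) (uu P (sm μ h)) - Rn b n (Phi b P) (sm μ (uu P h))) := by
      have hdiff : uu P (sm μ h) - sm μ (uu P h) = sm (μ ^ 2 - μ) (qq h) := by
        rw [uu_sm_err]; abel
      have h1 : dd c (uu P (sm μ h)) := dd_uu P (dd_sm μ hc)
      have h2 : dd c (sm μ (uu P h)) := dd_sm μ (dd_uu P hc)
      have h3 : dd (c ^ 2) (uu P (sm μ h) - sm μ (uu P h)) := by
        rw [hdiff]; exact dd_sm _ (dd_qq hc)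
      have h4 := E1 b n (Phi b P) (uu P (sm μ h)) (sm μ (uu P h)) c (c ^ 2) h1 h2 h3
      have hcc : c * c ^ 2 = c ^ 3 := by ring
      rwa [hcc] at h4
    exact dd_add t1 t2

/-! ### reduced-map multiplier cocycle -/

def Jt (z : ZMod p × ZMod p) : Matrix (Fin 2) (Fin 2) (ZMod p) := !![0, 1; 1, 2 * z.2]

def Gt (f : ZMod p × ZMod p → ZMod p × ZMod p) :
    ℕ → (ZMod p × ZMod p) → Matrix (Fin 2) (Fin 2) (ZMod p)
  | 0, _ => 1
  | n + 1, z => Gt f n (f z) * Jt z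

lemma Gt_add (f : ZMod p × ZMod p → ZMod p × ZMod p) (m : ℕ) :
    ∀ (n : ℕ) (z), Gt f (m + n) z = Gt f m (f^[n] z) * Gt f n z := by
  intro n
  induction n with
  | zero => intro z; simp [Gt]
  | succ n ih =>
    intro z
    have h : m + (n + 1) = (m + n) + 1 := by ring
    rw [h, show Gt f ((m+n)+1) z = Gt f (m+n) (f z) * Jt z from rfl, ih (f z),
      show Gt f (n+1) z = Gt f n (f z) * Jt z from rfl,
      mul_assoc]
    rw [Function.iterate_succ_apply f n z]

lemma iterate_fix {α : Type*} (f : α → α) (M : ℕ) (z : α) (hfix : f^[M] z = z) :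
    ∀ c : ℕ, f^[M * c] z = z := by
  intro c
  induction c with
  | zero => simp
  | succ c ih =>
    have h1 : M * (c + 1) = M * c + M := by ring
    rw [h1, Function.iterate_add_apply, hfix, ih]

lemma Gt_pow_fix (f : ZMod p × ZMod p → ZMod p × ZMod p) (M : ℕ) (z : ZMod p × ZMod p)
    (hfix : f^[M] z = z) : ∀ c : ℕ, Gt f (M * c) z = (Gt f M z) ^ c := by
  intro c
  induction c with
  | zero => simp [Gt]
  | succ c ih =>
    have h1 : M * (c + 1) = M + M * c := by ring
    rw [h1, Gt_add, iterate_fix f M z hfix c, ih, pow_succ']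

lemma Gt_list (f : ZMod p × ZMod p → ZMod p × ZMod p) :
    ∀ (n : ℕ) (z), Gt f n z = ((List.range n).map (fun i => Jt (f^[n - 1 - i] z))).prod := by
  intro n
  induction n with
  | zero => intro z; simp [Gt]
  | succ n ih =>
    intro z
    rw [show Gt f (n+1) z = Gt f n (f z) * Jt z from rfl, ih (f z)]
    rw [List.range_succ, List.map_append, List.prod_append]
    simp only [List.map_singleton, List.prod_singleton, List.prod_cons, List.prod_nil]
    have hmap : (List.range n).map (fun i => Jt (f^[n - 1 - i] (f z)))
        = (List.range n).map (fun i => Jt (f^[n + 1 - 1 - i] z)) := by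
      apply List.map_congr_left
      intro i hi
      have hi' : i < n := List.mem_range.mp hi
      have h2 : f^[n - 1 - i] (f z) = f^[(n - 1 - i) + 1] z :=
        (Function.iterate_succ_apply f _ z).symm
      have h3 : (n - 1 - i) + 1 = n + 1 - 1 - i := by omega
      rw [h2, h3]
    rw [hmap]
    congr 1
    have h4 : n + 1 - 1 - n = 0 := by omega
    rw [h4]
    simp

/-- exact period divides any period. -/
lemma per_dvd {α : Type*} (f : α → α) (a : α) (N : ℕ) (h1 : 1 ≤ N) (hper : f^[N] a = a)
    (hm : ∀ m : ℕ, 1 ≤ m → f^[m] a = a → N ≤ m) : ∀ m : ℕ, f^[m] a = a → N ∣ m := by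
  intro m hfix
  have hmod : f^[m % N] a = a := by
    have hsplit : m % N + N * (m / N) = m := Nat.mod_add_div m N
    have h5 : f^[m % N + N * (m / N)] a = a := by rw [hsplit]; exact hfix
    rwa [Function.iterate_add_apply, iterate_fix f N a hper (m / N)] at h5
  rcases Nat.eq_zero_or_pos (m % N) with h0 | hpos
  · exact Nat.dvd_of_mod_eq_zero h0
  · have := hm (m % N) hpos hmod
    have hlt : m % N < N := Nat.mod_lt _ (by omega)
    omega

/-- reduction map. -/
noncomputable def red (P : ℤ_[p] × ℤ_[p]) : ZMod p × ZMod p :=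
  (PadicInt.toZMod P.1, PadicInt.toZMod P.2)

lemma toZMod_eq_zero_iff (x : ℤ_[p]) : PadicInt.toZMod x = 0 ↔ (p : ℤ_[p]) ∣ x := by
  rw [← Ideal.mem_span_singleton, ← PadicInt.maximalIdeal_eq_span_p, ← PadicInt.ker_toZMod,
    RingHom.mem_ker]

lemma dd_of_red_eq {P P' : ℤ_[p] × ℤ_[p]} (h : red P = red P') :
    dd (p : ℤ_[p]) (P - P') := by
  rw [red, red, Prod.mk.injEq] at h
  constructor
  · rw [← toZMod_eq_zero_iff, Prod.fst_sub, map_sub, h.1, sub_self]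
  · rw [← toZMod_eq_zero_iff, Prod.snd_sub, map_sub, h.2, sub_self]

lemma redJP (P : ℤ_[p] × ℤ_[p]) :
    (PadicInt.toZMod : ℤ_[p] →+* ZMod p).mapMatrix (JP P) = Jt (red P) := by
  ext i j
  fin_cases i <;> fin_cases j <;>
    simp [JP, Jt, red, RingHom.mapMatrix_apply, Matrix.map_apply, map_mul, map_ofNat]

lemma redJn (b : ℤ_[p]) (φt : ZMod p × ZMod p → ZMod p × ZMod p)
    (hred : ∀ P, red (Phi b P) = φt (red P)) :
    ∀ (n : ℕ) (P), (PadicInt.toZMod : ℤ_[p] →+* ZMod p).mapMatrix (Jn b n P)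
      = Gt φt n (red P) := by
  intro n
  induction n with
  | zero => intro P; simp [Jn, Gt]
  | succ n ih =>
    intro P
    rw [show Jn b (n+1) P = Jn b n (Phi b P) * JP P from rfl, map_mul, ih (Phi b P),
      redJP, hred, show Gt φt (n+1) (red P) = Gt φt n (φt (red P)) * Jt (red P) from rfl]

lemma red_iterate (b : ℤ_[p]) (φt : ZMod p × ZMod p → ZMod p × ZMod p)
    (hred : ∀ P, red (Phi b P) = φt (red P)) :
    ∀ (n : ℕ) (P), red ((Phi b)^[n] P) = φt^[n] (red P) := by
  intro n
  induction n with
  | zero => intro P; rfl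
  | succ n ih =>
    intro P
    rw [Function.iterate_succ_apply, Function.iterate_succ_apply, ih (Phi b P), hred]

/-! ### Gauss sums -/

def cseq : ℕ → ℕ
  | 0 => 0
  | i + 1 => cseq i + i

def dseq : ℕ → ℕ
  | 0 => 0
  | i + 1 => dseq i + i * i

lemma cseq_id : ∀ i : ℕ, 2 * (cseq i : ℤ) = i * (i - 1) := by
  intro i
  induction i with
  | zero => simp [cseq]
  | succ i ih =>
    have h : (cseq (i+1) : ℤ) = cseq i + i := by rw [cseq]; push_cast; ring
    rw [h]
    push_cast
    push_cast at ih
    nlinarith [ih]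

lemma dseq_id : ∀ i : ℕ, 6 * (dseq i : ℤ) = i * (i - 1) * (2 * i - 1) := by
  intro i
  induction i with
  | zero => simp [dseq]
  | succ i ih =>
    have h : (dseq (i+1) : ℤ) = dseq i + i * i := by rw [dseq]; push_cast; ring
    rw [h]
    push_cast
    push_cast at ih
    nlinarith [ih]

lemma p_dvd_cseq (hp : p.Prime) (hodd : 3 ≤ p) : p ∣ cseq p := by
  have h2 : (p : ℤ) ∣ 2 * (cseq p : ℤ) := by
    rw [cseq_id]
    exact Dvd.intro _ rfl
  have hpz : Prime (p : ℤ) := Nat.prime_iff_prime_int.mp hp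
  rcases hpz.dvd_mul.mp h2 with h | h
  · exfalso
    have := Int.le_of_dvd (by norm_num) h
    omega
  · exact_mod_cast h

lemma p_dvd_dseq (hp : p.Prime) (h5 : 5 ≤ p) : p ∣ dseq p := by
  have h2 : (p : ℤ) ∣ 6 * (dseq p : ℤ) := by
    rw [dseq_id]
    exact ⟨(p - 1) * (2 * p - 1), by ring⟩
  have hpz : Prime (p : ℤ) := Nat.prime_iff_prime_int.mp hp
  rcases hpz.dvd_mul.mp h2 with h | h
  · exfalso
    have h6 : p ∣ 6 := by exact_mod_cast h
    have h23 : p ∣ 2 * 3 := by norm_num; exact h6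
    rcases (Nat.Prime.dvd_mul hp).mp h23 with h' | h'
    · have := Nat.le_of_dvd (by norm_num) h'
      omega
    · have := Nat.le_of_dvd (by norm_num) h'
      omega
  · exact_mod_cast h

/-! ### the key cycle contradiction -/

theorem core (hp5 : 5 ≤ p) (b : ℤ_[p]) (L q : ℕ) (hq : q.Prime)
    (Q' : ℤ_[p] × ℤ_[p])
    (hfixq : (Phi b)^[L * q] Q' = Q')
    (hne : (Phi b)^[L] Q' ≠ Q')
    (hJ : ∀ i j, (p : ℤ_[p]) ∣ (Jn b L Q' - 1) i j)
    (hdisk : dd (p : ℤ_[p]) ((Phi b)^[L] Q' - Q')) : False := by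
  classical
  have hpp : p.Prime := Fact.out
  have hp0 : (p : ℤ_[p]) ≠ 0 := by
    intro h
    have h1 : ‖(p : ℤ_[p])‖ = 0 := by rw [h, norm_zero]
    rw [PadicInt.norm_p] at h1
    have : (0:ℝ) < (p : ℝ)⁻¹ := by
      apply inv_pos.mpr
      exact_mod_cast hpp.pos
    linarith
  set δ : ℤ_[p] × ℤ_[p] := (Phi b)^[L] Q' - Q' with hδ
  have hδne : δ ≠ 0 := sub_ne_zero.mpr hne
  -- find the exact divisibility level n
  have hbound : ∃ k : ℕ, ¬ dd ((p : ℤ_[p]) ^ (k + 1)) δ := by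
    have hcoord : δ.1 ≠ 0 ∨ δ.2 ≠ 0 := by
      by_contra hcon
      push_neg at hcon
      exact hδne (Prod.ext hcon.1 hcon.2)
    have key : ∀ x : ℤ_[p], x ≠ 0 → ∃ k : ℕ, ¬ (p : ℤ_[p]) ^ (k + 1) ∣ x := by
      intro x hx
      have hnorm : 0 < ‖x‖ := norm_pos_iff.mpr hx
      have hlt : (p : ℝ)⁻¹ < 1 := by
        rw [inv_lt_one_iff₀]
        right
        exact_mod_cast hpp.one_lt
      obtain ⟨k, hk⟩ := exists_pow_lt_of_lt_one hnorm hlt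
      refine ⟨k, fun hdvd => ?_⟩
      obtain ⟨y, hy⟩ := hdvd
      have h1 : ‖x‖ ≤ ((p : ℝ)⁻¹) ^ (k + 1) := by
        rw [hy, norm_mul, norm_pow, PadicInt.norm_p]
        calc ((p:ℝ)⁻¹) ^ (k+1) * ‖y‖ ≤ ((p:ℝ)⁻¹) ^ (k+1) * 1 := by
              apply mul_le_mul_of_nonneg_left (PadicInt.norm_le_one y)
              positivity
          _ = ((p:ℝ)⁻¹) ^ (k+1) := by ring
      have h2 : ((p:ℝ)⁻¹) ^ (k + 1) ≤ ((p:ℝ)⁻¹) ^ k := by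
        apply pow_le_pow_of_le_one (by positivity) (le_of_lt hlt)
        omega
      linarith
    rcases hcoord with hx | hx
    · obtain ⟨k, hk⟩ := key _ hx
      exact ⟨k, fun hddk => hk hddk.1⟩
    · obtain ⟨k, hk⟩ := key _ hx
      exact ⟨k, fun hddk => hk hddk.2⟩
  set n : ℕ := Nat.find hbound with hn
  have hn_not : ¬ dd ((p : ℤ_[p]) ^ (n + 1)) δ := Nat.find_spec hbound
  have hn1 : 1 ≤ n := by
    rcases Nat.eq_zero_or_pos n with h0 | h
    · exfalso
      apply hn_not
      rw [h0]
      simpa using hdisk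
    · exact h
  have hn_dd : dd ((p : ℤ_[p]) ^ n) δ := by
    have hlt : n - 1 < n := by omega
    have := Nat.find_min hbound (by omega : n - 1 < n)
    push_neg at this
    have h2 : n - 1 + 1 = n := by omega
    rw [h2] at this
    exact this
  -- the matrices
  set J0 : Matrix (Fin 2) (Fin 2) ℤ_[p] := Jn b L Q' with hJ0
  set D : Matrix (Fin 2) (Fin 2) ℤ_[p] := J0 - 1 with hD
  have hJsplit : ∀ v : ℤ_[p] × ℤ_[p], act J0 v = v + act D v := by
    intro v
    have h1 : J0 = 1 + D := by rw [hD]; abel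
    rw [h1, act_matadd, act_one]
  have hXdd : dd ((p : ℤ_[p]) ^ (n + 1)) (act D δ) := by
    have := dd_act_mat (A := D) hJ hn_dd
    rwa [← pow_succ'] at this
  have hYdd : dd ((p : ℤ_[p]) ^ (2 * n)) (Rn b L Q' δ) := by
    have h1 := E1 b L Q' δ 0 ((p:ℤ_[p])^n) ((p:ℤ_[p])^n) hn_dd (dd_zero _) (by simpa using hn_dd)
    rw [Rn_zero_h, sub_zero, ← pow_add] at h1
    have h2 : n + n = 2 * n := by ring
    rwa [h2] at h1
  -- the orbit differences
  set w : ℕ → ℤ_[p] × ℤ_[p] := fun i => (Phi b)^[L * i] Q' - Q' with hw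
  have hw0 : w 0 = 0 := by simp [hw]
  have hwrec : ∀ i : ℕ, w (i + 1) = δ + (w i + act D (w i)) + Rn b L Q' (w i) := by
    intro i
    have h1 : L * (i + 1) = L + L * i := by ring
    have h2 : (Phi b)^[L * (i+1)] Q' = (Phi b)^[L] (Q' + w i) := by
      rw [h1, Function.iterate_add_apply]
      congr 1
      rw [hw]
      simp
    have h3 : (Phi b)^[L] Q' = Q' + δ := by rw [hδ]; abel
    show (Phi b)^[L * (i+1)] Q' - Q' = _
    rw [h2, Rn_spec b L Q' (w i), ← hJ0, hJsplit, h3]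
    abel
  have hwq : w q = 0 := by
    rw [hw]
    simp only
    rw [hfixq, sub_self]
  -- the master congruence
  have claim : ∀ i : ℕ, dd ((p : ℤ_[p]) ^ (n + 2))
      (w i - sm (i : ℤ_[p]) δ - sm ((cseq i : ℕ) : ℤ_[p]) (act D δ) - sm ((dseq i : ℕ) : ℤ_[p]) (Rn b L Q' δ)) := by
    intro i
    induction i with
    | zero =>
      have hz : w 0 - sm ((0:ℕ) : ℤ_[p]) δ - sm ((cseq 0 : ℕ) : ℤ_[p]) (act D δ)
          - sm ((dseq 0 : ℕ) : ℤ_[p]) (Rn b L Q' δ) = 0 := by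
        rw [hw0, show cseq 0 = 0 from rfl, show dseq 0 = 0 from rfl]
        rw [Nat.cast_zero, sm_zero_c, sm_zero_c, sm_zero_c]
        abel
      rw [hz]
      exact dd_zero _
    | succ i ih =>
      -- auxiliary congruences at level i
      have C2 : dd ((p : ℤ_[p]) ^ (n + 1)) (w i - sm (i : ℤ_[p]) δ) := by
        have hsplit : w i - sm (i : ℤ_[p]) δ
            = (w i - sm (i : ℤ_[p]) δ - sm ((cseq i : ℕ) : ℤ_[p]) (act D δ) - sm ((dseq i : ℕ) : ℤ_[p]) (Rn b L Q' δ))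
              + sm ((cseq i : ℕ) : ℤ_[p]) (act D δ) + sm ((dseq i : ℕ) : ℤ_[p]) (Rn b L Q' δ) := by abel
        rw [hsplit]
        refine dd_add (dd_add ?_ ?_) ?_
        · exact dd_mono (pow_dvd_pow _ (by omega)) ih
        · exact dd_sm _ hXdd
        · exact dd_mono (pow_dvd_pow _ (by omega)) (dd_sm _ hYdd)
      have C1 : dd ((p : ℤ_[p]) ^ n) (w i) := by
        have hsplit : w i = (w i - sm (i : ℤ_[p]) δ) + sm (i : ℤ_[p]) δ := by abel
        rw [hsplit]
        exact dd_add (dd_mono (pow_dvd_pow _ (by omega)) C2) (dd_sm _ hn_dd)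
      -- expand the step
      have hstep : w (i+1) - sm ((i+1 : ℕ) : ℤ_[p]) δ - sm ((cseq (i+1) : ℕ) : ℤ_[p]) (act D δ)
            - sm ((dseq (i+1) : ℕ) : ℤ_[p]) (Rn b L Q' δ)
          = (w i - sm (i : ℤ_[p]) δ - sm ((cseq i : ℕ) : ℤ_[p]) (act D δ) - sm ((dseq i : ℕ) : ℤ_[p]) (Rn b L Q' δ))
            + act D (w i - sm (i : ℤ_[p]) δ)
            + (Rn b L Q' (w i) - Rn b L Q' (sm (i : ℤ_[p]) δ))
            + (Rn b L Q' (sm (i : ℤ_[p]) δ) - sm ((i : ℤ_[p]) ^ 2) (Rn b L Q' δ)) := by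
        rw [hwrec i]
        have e1 : sm ((i+1 : ℕ) : ℤ_[p]) δ = sm (i : ℤ_[p]) δ + δ := by
          push_cast
          rw [add_sm, sm_one]
        have e2 : sm ((cseq (i+1) : ℕ) : ℤ_[p]) (act D δ)
            = sm ((cseq i : ℕ) : ℤ_[p]) (act D δ) + sm (i : ℤ_[p]) (act D δ) := by
          rw [show cseq (i+1) = cseq i + i from rfl]
          push_cast
          rw [add_sm]
        have e3 : sm ((dseq (i+1) : ℕ) : ℤ_[p]) (Rn b L Q' δ)
            = sm ((dseq i : ℕ) : ℤ_[p]) (Rn b L Q' δ) + sm ((i : ℤ_[p]) ^ 2) (Rn b L Q' δ) := by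
          rw [show dseq (i+1) = dseq i + i * i from rfl]
          push_cast
          rw [add_sm]
          congr 1
          rw [sq]
        rw [e1, e2, e3]
        have e4 : act D (w i - sm (i : ℤ_[p]) δ) = act D (w i) - sm (i : ℤ_[p]) (act D δ) := by
          rw [act_sub, act_sm]
        rw [e4]
        abel
      rw [hstep]
      refine dd_add (dd_add (dd_add ih ?_) ?_) ?_
      · -- act D (w i - i δ)
        have := dd_act_mat (A := D) hJ C2
        rwa [← pow_succ'] at this
      · -- E1 term
        have h1 := E1 b L Q' (w i) (sm (i : ℤ_[p]) δ) ((p:ℤ_[p])^n) ((p:ℤ_[p])^(n+1))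
          C1 (dd_sm _ hn_dd) C2
        rw [← pow_add] at h1
        exact dd_mono (pow_dvd_pow _ (by omega)) h1
      · -- E2 term
        have h1 := E2 b L Q' δ ((p:ℤ_[p])^n) (i : ℤ_[p]) hn_dd
        rw [← pow_mul] at h1
        have h12 : n + 2 ≤ n * 3 := by omega
        exact dd_mono (pow_dvd_pow _ h12) h1
  -- final contradiction
  have hq_ne_p_or : q = p ∨ q ≠ p := em _
  have hcontra : dd ((p : ℤ_[p]) ^ (n + 1)) δ := by
    rcases hq_ne_p_or with hqp | hqp
    · -- q = p : use the full claim
      have hq_cast : ((q:ℕ) : ℤ_[p]) = ((p:ℕ) : ℤ_[p]) := by rw [hqp]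
      have h1 := claim q
      rw [hwq] at h1
      have h2 : dd ((p : ℤ_[p]) ^ (n + 2))
          (sm (q : ℤ_[p]) δ + sm ((cseq q : ℕ) : ℤ_[p]) (act D δ) + sm ((dseq q : ℕ) : ℤ_[p]) (Rn b L Q' δ)) := by
        have := dd_neg h1
        have heq : -(0 - sm (q : ℤ_[p]) δ - sm ((cseq q : ℕ) : ℤ_[p]) (act D δ)
            - sm ((dseq q : ℕ) : ℤ_[p]) (Rn b L Q' δ))
            = sm (q : ℤ_[p]) δ + sm ((cseq q : ℕ) : ℤ_[p]) (act D δ) + sm ((dseq q : ℕ) : ℤ_[p]) (Rn b L Q' δ) := by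
          abel
        rwa [heq] at this
      -- the (act D δ) and Y terms are deeply divisible
      obtain ⟨mc, hmc⟩ : ∃ m, cseq q = p * m := by rw [hqp]; exact p_dvd_cseq hpp (by omega)
      obtain ⟨md, hmd⟩ : ∃ m, dseq q = p * m := by rw [hqp]; exact p_dvd_dseq hpp hp5
      have hXterm : dd ((p : ℤ_[p]) ^ (n + 2)) (sm ((cseq q : ℕ) : ℤ_[p]) (act D δ)) := by
        have h3 : ((cseq q : ℕ) : ℤ_[p]) = (p : ℤ_[p]) * (mc : ℤ_[p]) := by
          rw [hmc]; push_cast; ring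
        have h4 : sm ((cseq q : ℕ) : ℤ_[p]) (act D δ) = sm (p : ℤ_[p]) (sm (mc : ℤ_[p]) (act D δ)) := by
          rw [sm_sm, h3]
        rw [h4]
        have h5 : dd ((p:ℤ_[p])^(n+1)) (sm (mc : ℤ_[p]) (act D δ)) := dd_sm _ hXdd
        have h6 := dd_sm' (p : ℤ_[p]) h5
        rwa [← pow_succ'] at h6
      have hYterm : dd ((p : ℤ_[p]) ^ (n + 2)) (sm ((dseq q : ℕ) : ℤ_[p]) (Rn b L Q' δ)) := by
        have h3 : ((dseq q : ℕ) : ℤ_[p]) = (p : ℤ_[p]) * (md : ℤ_[p]) := by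
          rw [hmd]; push_cast; ring
        have h4 : sm ((dseq q : ℕ) : ℤ_[p]) (Rn b L Q' δ) = sm (p : ℤ_[p]) (sm (md : ℤ_[p]) (Rn b L Q' δ)) := by
          rw [sm_sm, h3]
        rw [h4]
        have h5 : dd ((p:ℤ_[p])^(2*n)) (sm (md : ℤ_[p]) (Rn b L Q' δ)) := dd_sm _ hYdd
        have h6 := dd_sm' (p : ℤ_[p]) h5
        rw [← pow_succ'] at h6
        exact dd_mono (pow_dvd_pow _ (by omega)) h6
      have hsmδ : dd ((p : ℤ_[p]) ^ (n + 2)) (sm (q : ℤ_[p]) δ) := by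
        have heq : sm (q : ℤ_[p]) δ
            = (sm (q : ℤ_[p]) δ + sm ((cseq q : ℕ) : ℤ_[p]) (act D δ) + sm ((dseq q : ℕ) : ℤ_[p]) (Rn b L Q' δ))
              - sm ((cseq q : ℕ) : ℤ_[p]) (act D δ) - sm ((dseq q : ℕ) : ℤ_[p]) (Rn b L Q' δ) := by abel
        rw [heq]
        exact dd_sub (dd_sub h2 hXterm) hYterm
      -- cancel one factor of p
      constructor
      · have h7 : (p:ℤ_[p])^(n+2) ∣ (p:ℤ_[p]) * δ.1 := by
          have := hsmδ.1
          rw [show (sm ((q:ℕ) : ℤ_[p]) δ).1 = ((q:ℕ):ℤ_[p]) * δ.1 from rfl, hq_cast] at this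
          exact this
        have h8 : (p:ℤ_[p]) * (p:ℤ_[p])^(n+1) ∣ (p:ℤ_[p]) * δ.1 := by
          rw [← pow_succ']; exact h7
        exact (mul_dvd_mul_iff_left hp0).mp h8
      · have h7 : (p:ℤ_[p])^(n+2) ∣ (p:ℤ_[p]) * δ.2 := by
          have := hsmδ.2
          rw [show (sm ((q:ℕ) : ℤ_[p]) δ).2 = ((q:ℕ):ℤ_[p]) * δ.2 from rfl, hq_cast] at this
          exact this
        have h8 : (p:ℤ_[p]) * (p:ℤ_[p])^(n+1) ∣ (p:ℤ_[p]) * δ.2 := by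
          rw [← pow_succ']; exact h7
        exact (mul_dvd_mul_iff_left hp0).mp h8
    · -- q ≠ p : Bezout
      have h1 := claim q
      rw [hwq] at h1
      have C2q : dd ((p : ℤ_[p]) ^ (n + 1)) (sm (q : ℤ_[p]) δ) := by
        have h2 : dd ((p : ℤ_[p]) ^ (n + 1))
            (0 - sm (q : ℤ_[p]) δ - sm ((cseq q : ℕ) : ℤ_[p]) (act D δ) - sm ((dseq q : ℕ) : ℤ_[p]) (Rn b L Q' δ)) :=
          dd_mono (pow_dvd_pow _ (by omega)) h1
        have h3 : sm (q : ℤ_[p]) δ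
            = -(0 - sm (q : ℤ_[p]) δ - sm ((cseq q : ℕ) : ℤ_[p]) (act D δ) - sm ((dseq q : ℕ) : ℤ_[p]) (Rn b L Q' δ))
              - sm ((cseq q : ℕ) : ℤ_[p]) (act D δ) - sm ((dseq q : ℕ) : ℤ_[p]) (Rn b L Q' δ) := by abel
        rw [h3]
        refine dd_sub (dd_sub (dd_neg h2) (dd_sm _ hXdd)) ?_
        exact dd_mono (pow_dvd_pow _ (by omega)) (dd_sm _ hYdd)
      -- Bezout: A p + B q = 1
      have hcop : Nat.Coprime p q := (Nat.coprime_primes hpp hq).mpr (fun h => hqp h.symm)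
      have hgcd : (1 : ℤ) = p * Nat.gcdA p q + q * Nat.gcdB p q := by
        have := Nat.gcd_eq_gcd_ab p q
        rwa [hcop.gcd_eq_one] at this
      have hbez : (1 : ℤ_[p]) = (p : ℤ_[p]) * ((Nat.gcdA p q : ℤ) : ℤ_[p])
          + (q : ℤ_[p]) * ((Nat.gcdB p q : ℤ) : ℤ_[p]) := by
        have := congrArg (fun t : ℤ => ((t : ℤ_[p]))) hgcd
        push_cast at this
        exact_mod_cast this
      constructor
      · have hd1 : δ.1 = ((Nat.gcdA p q : ℤ) : ℤ_[p]) * ((p:ℤ_[p]) * δ.1)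
            + ((Nat.gcdB p q : ℤ) : ℤ_[p]) * ((q:ℤ_[p]) * δ.1) := by
          conv_lhs => rw [← one_mul δ.1, hbez]
          ring
        rw [hd1]
        refine dvd_add (Dvd.dvd.mul_left ?_ _) (Dvd.dvd.mul_left ?_ _)
        · have h5 : (p:ℤ_[p])^(n+1) = (p:ℤ_[p]) * (p:ℤ_[p])^n := (pow_succ' _ _)
          rw [h5]
          exact mul_dvd_mul_left _ hn_dd.1
        · have := C2q.1
          rwa [show (sm ((q:ℕ) : ℤ_[p]) δ).1 = (q:ℤ_[p]) * δ.1 from rfl] at this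
      · have hd1 : δ.2 = ((Nat.gcdA p q : ℤ) : ℤ_[p]) * ((p:ℤ_[p]) * δ.2)
            + ((Nat.gcdB p q : ℤ) : ℤ_[p]) * ((q:ℤ_[p]) * δ.2) := by
          conv_lhs => rw [← one_mul δ.2, hbez]
          ring
        rw [hd1]
        refine dvd_add (Dvd.dvd.mul_left ?_ _) (Dvd.dvd.mul_left ?_ _)
        · have h5 : (p:ℤ_[p])^(n+1) = (p:ℤ_[p]) * (p:ℤ_[p])^n := (pow_succ' _ _)
          rw [h5]
          exact mul_dvd_mul_left _ hn_dd.2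
        · have := C2q.2
          rwa [show (sm ((q:ℕ) : ℤ_[p]) δ).2 = (q:ℤ_[p]) * δ.2 from rfl] at this
  exact hn_not hcontra



/-- Integrality of periodic points. -/
lemma integral (b : ℤ_[p]) (φ : ℚ_[p] × ℚ_[p] → ℚ_[p] × ℚ_[p])
    (hφ : ∀ P, φ P = (P.2, P.1 + P.2 ^ 2 + (b : ℚ_[p])))
    (Q : ℚ_[p] × ℚ_[p]) (N : ℕ) (hN : 1 ≤ N) (hper : φ^[N] Q = Q) :
    ‖Q.1‖ ≤ 1 ∧ ‖Q.2‖ ≤ 1 := by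
  set Y : ℕ → ℚ_[p] := fun i => (φ^[i] Q).2 with hY
  have hYshift : ∀ k j : ℕ, φ^[j + N * k] Q = φ^[j] Q := by
    intro k
    induction k with
    | zero => simp
    | succ k ih =>
      intro j
      have h1 : j + N * (k + 1) = (j + N * k) + N := by ring
      rw [h1, Function.iterate_add_apply, hper, ih]
  have hYmod : ∀ i : ℕ, Y i = Y (i % N) := by
    intro i
    have h1 : i % N + N * (i / N) = i := Nat.mod_add_div i N
    conv_lhs => rw [← h1]
    rw [hY]
    simp only
    rw [hYshift (i / N) (i % N)]
  have hX : ∀ i : ℕ, (φ^[i + 1] Q).1 = Y i := by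
    intro i
    rw [Function.iterate_succ_apply', hφ]
  have hstep : ∀ i : ℕ, Y (i + 1) = (φ^[i] Q).1 + Y i ^ 2 + (b : ℚ_[p]) := by
    intro i
    rw [hY]; simp only
    rw [Function.iterate_succ_apply', hφ]
  have hrec : ∀ i : ℕ, Y (i + 2) = Y (i + 1) ^ 2 + (Y i + (b : ℚ_[p])) := by
    intro i
    have := hstep (i + 1)
    rw [hX i] at this
    rw [this]; ring
  obtain ⟨i₀, hi₀mem, hmax⟩ :=
    Finset.exists_max_image (Finset.range N) (fun i => ‖Y i‖) ⟨0, Finset.mem_range.mpr hN⟩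
  set c : ℝ := ‖Y i₀‖ with hc
  have hall : ∀ i : ℕ, ‖Y i‖ ≤ c := by
    intro i
    rw [hYmod i]
    exact hmax _ (Finset.mem_range.mpr (Nat.mod_lt _ (by omega)))
  have hcle : c ≤ 1 := by
    by_contra hgt
    push_neg at hgt
    set m : ℕ := i₀ + N - 1 with hm
    have hm1 : m + 1 = i₀ + N := by omega
    have hYm1 : ‖Y (m + 1)‖ = c := by
      rw [hm1, hY]
      simp only
      rw [show i₀ + N = i₀ + N * 1 by ring, hYshift 1 i₀]
    have hsq : ‖Y (m + 1) ^ 2‖ = c ^ 2 := by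
      rw [pow_two, norm_mul, hYm1, pow_two]
    have hbnorm : ‖(b : ℚ_[p])‖ ≤ 1 := by
      rw [PadicInt.padic_norm_e_of_padicInt]; exact PadicInt.norm_le_one b
    have hc2 : c < c ^ 2 := by nlinarith
    have hsmall : ‖Y m + (b : ℚ_[p])‖ < c ^ 2 := by
      calc ‖Y m + (b : ℚ_[p])‖ ≤ max ‖Y m‖ ‖(b : ℚ_[p])‖ := Padic.nonarchimedean _ _
        _ ≤ c := max_le (hall m) (le_trans hbnorm (le_of_lt hgt))
        _ < c ^ 2 := hc2
    have hne : ‖Y (m + 1) ^ 2‖ ≠ ‖Y m + (b : ℚ_[p])‖ := by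
      rw [hsq]; exact ne_of_gt hsmall
    have hbig : ‖Y (m + 2)‖ = c ^ 2 := by
      rw [hrec m, Padic.add_eq_max_of_ne hne, hsq]
      exact max_eq_left (le_of_lt hsmall)
    have := hall (m + 2)
    rw [hbig] at this
    linarith
  refine ⟨?_, ?_⟩
  · have h1 : Q.1 = (φ^[(N - 1) + 1] Q).1 := by
      rw [show N - 1 + 1 = N by omega, hper]
    rw [h1, hX]
    exact le_trans (hall _) hcle
  · exact le_trans (hall 0) hcle


end Stmt15Aux

open Stmt15Aux in
/-- for `p ≥ 5`, `b ∈ ℤ_p`, and `φ(x,y) = (y, x+y²+b)`, a `ℚ_p`-rational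
point `Q` of exact period `N` has integral coordinates, and if its reduction mod `p`
has exact period `M` under the reduced map, and `r` is the order of the multiplier
matrix `Λ = ∏_{i=0}^{M-1} J_{φ̃}(φ̃^{M-1-i}(Q̃))`, then `N = dM` for some divisor `d` of `r`. -/
theorem stmt15 (p : ℕ) [Fact p.Prime] (hp : 5 ≤ p) (b : ℤ_[p])
    (φ : ℚ_[p] × ℚ_[p] → ℚ_[p] × ℚ_[p])
    (hφ : ∀ P, φ P = (P.2, P.1 + P.2 ^ 2 + (b : ℚ_[p])))
    (Q : ℚ_[p] × ℚ_[p]) (N : ℕ) (hN : 1 ≤ N) (hper : φ^[N] Q = Q)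
    (hmin : ∀ m : ℕ, 1 ≤ m → φ^[m] Q = Q → N ≤ m)
    (φt : ZMod p × ZMod p → ZMod p × ZMod p)
    (hφt : ∀ P, φt P = (P.2, P.1 + P.2 ^ 2 + PadicInt.toZMod b)) :
    ‖Q.1‖ ≤ 1 ∧ ‖Q.2‖ ≤ 1 ∧
    ∀ x y : ℤ_[p], ((x : ℚ_[p]), (y : ℚ_[p])) = Q →
      ∀ M : ℕ, 1 ≤ M →
        φt^[M] (PadicInt.toZMod x, PadicInt.toZMod y) =
          (PadicInt.toZMod x, PadicInt.toZMod y) →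
        (∀ m : ℕ, 1 ≤ m →
          φt^[m] (PadicInt.toZMod x, PadicInt.toZMod y) =
            (PadicInt.toZMod x, PadicInt.toZMod y) → M ≤ m) →
        ∀ Λ : Matrix (Fin 2) (Fin 2) (ZMod p),
          Λ = ((List.range M).map (fun i =>
            !![0, 1; 1, 2 * ((φt^[M - 1 - i] (PadicInt.toZMod x, PadicInt.toZMod y)).2)])).prod →
          ∃ d : ℕ, d ∣ orderOf Λ ∧ N = d * M := by
  classical
  obtain ⟨hint1, hint2⟩ := integral b φ hφ Q N hN hper
  refine ⟨hint1, hint2, ?_⟩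
  intro x y hxy M hM1 hMfix hMmin Λ hΛ
  set Q' : ℤ_[p] × ℤ_[p] := (x, y) with hQ'
  set ι : ℤ_[p] × ℤ_[p] → ℚ_[p] × ℚ_[p] := fun P => ((P.1 : ℚ_[p]), (P.2 : ℚ_[p])) with hι
  have hsemi : ∀ P : ℤ_[p] × ℤ_[p], φ (ι P) = ι (Phi b P) := by
    intro P
    rw [hφ]
    refine Prod.ext ?_ ?_
    · rfl
    · show (P.1 : ℚ_[p]) + (P.2 : ℚ_[p]) ^ 2 + (b : ℚ_[p]) = ((P.1 + P.2 ^ 2 + b : ℤ_[p]) : ℚ_[p])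
      push_cast
      ring
  have hiter : ∀ (n : ℕ) (P : ℤ_[p] × ℤ_[p]), φ^[n] (ι P) = ι ((Phi b)^[n] P) := by
    intro n
    induction n with
    | zero => intro P; rfl
    | succ n ih =>
      intro P
      rw [Function.iterate_succ_apply, Function.iterate_succ_apply, hsemi, ih]
  have hQι : ι Q' = Q := hxy
  have hinj : ∀ P P' : ℤ_[p] × ℤ_[p], ι P = ι P' → P = P' := by
    intro P P' h
    rw [hι] at h
    simp only [Prod.mk.injEq] at h
    exact Prod.ext (Subtype.coe_injective h.1) (Subtype.coe_injective h.2)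
  have hPhiN : (Phi b)^[N] Q' = Q' := by
    apply hinj
    rw [← hiter, hQι, hper]
  have hPhimin : ∀ m : ℕ, 1 ≤ m → (Phi b)^[m] Q' = Q' → N ≤ m := by
    intro m hm hfix
    apply hmin m hm
    rw [← hQι, hiter, hfix]
  have hNdvd : ∀ m : ℕ, (Phi b)^[m] Q' = Q' → N ∣ m :=
    per_dvd (Phi b) Q' N hN hPhiN hPhimin
  -- reduction
  have hred : ∀ P, red (Phi b P) = φt (red P) := by
    intro P
    rw [hφt]
    refine Prod.ext ?_ ?_
    · rfl
    · show PadicInt.toZMod (P.1 + P.2 ^ 2 + b)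
        = PadicInt.toZMod P.1 + (PadicInt.toZMod P.2) ^ 2 + PadicInt.toZMod b
      rw [map_add, map_add, map_pow]
  have hz : red Q' = (PadicInt.toZMod x, PadicInt.toZMod y) := rfl
  have hredn := red_iterate b φt hred
  have hMfix' : φt^[M] (red Q') = red Q' := by rw [hz]; exact hMfix
  have hNfix_t : φt^[N] (red Q') = red Q' := by
    rw [← hredn, hPhiN]
  have hMdvdN : M ∣ N := by
    have := per_dvd φt (red Q') M hM1 hMfix'
      (by intro m hm hfix; exact hMmin m hm (by rw [hz] at hfix; exact hfix)) N hNfix_t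
    exact this
  set r : ℕ := orderOf Λ with hr
  have hΛGt : Λ = Gt φt M (red Q') := by
    rw [hΛ, Gt_list φt M (red Q')]
    rfl
  have hkey : N ∣ M * r := by
    set G := M * r with hG
    have hGN : ((Phi b)^[G])^[N] Q' = Q' := by
      rw [← Function.iterate_mul]
      rw [mul_comm]
      exact iterate_fix (Phi b) N Q' hPhiN G
    have hex : ∃ t, 0 < t ∧ ((Phi b)^[G])^[t] Q' = Q' := ⟨N, hN, hGN⟩
    set t := Nat.find hex with ht
    obtain ⟨htpos, htfix⟩ : 0 < t ∧ ((Phi b)^[G])^[t] Q' = Q' := Nat.find_spec hex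
    by_cases ht1 : t = 1
    · have hfix1 : (Phi b)^[G] Q' = Q' := by
        have h7 := htfix
        rw [ht1] at h7
        simpa using h7
      exact hNdvd G hfix1
    · exfalso
      set q := t.minFac with hq
      have hqprime : q.Prime := Nat.minFac_prime ht1
      have hqdvd : q ∣ t := Nat.minFac_dvd t
      set L := G * (t / q) with hL
      have hLq : L * q = G * t := by
        rw [hL, mul_assoc, Nat.div_mul_cancel hqdvd]
      have hLM : L = M * (r * (t / q)) := by rw [hL, hG]; ring
      refine core hp b L q hqprime Q' ?_ ?_ ?_ ?_
      · rw [hLq, Function.iterate_mul]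
        exact htfix
      · intro hfixL
        have h2 : ((Phi b)^[G])^[t / q] Q' = Q' := by
          rw [← Function.iterate_mul, ← hL]
          exact hfixL
        have htq_pos : 0 < t / q := Nat.div_pos (Nat.minFac_le (by omega)) hqprime.pos
        have htq_lt : t / q < t := Nat.div_lt_self (by omega) hqprime.two_le
        exact Nat.find_min hex htq_lt ⟨htq_pos, h2⟩
      · intro i j
        have hmap : (PadicInt.toZMod : ℤ_[p] →+* ZMod p).mapMatrix (Jn b L Q') = 1 := by
          rw [redJn b φt hred L Q', hLM, Gt_pow_fix φt M (red Q') hMfix' (r * (t / q)),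
            ← hΛGt, pow_mul, pow_orderOf_eq_one, one_pow]
        have h4 : PadicInt.toZMod ((Jn b L Q') i j)
            = (1 : Matrix (Fin 2) (Fin 2) (ZMod p)) i j := by
          have h5 : ((Jn b L Q').map (PadicInt.toZMod : ℤ_[p] →+* ZMod p)) i j
              = (1 : Matrix (Fin 2) (Fin 2) (ZMod p)) i j := by
            rw [← RingHom.mapMatrix_apply, hmap]
          rwa [Matrix.map_apply] at h5
        have h6 : PadicInt.toZMod ((Jn b L Q' - 1) i j) = 0 := by
          rw [Matrix.sub_apply, map_sub, h4, Matrix.one_apply, Matrix.one_apply]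
          split_ifs with hij
          · simp
          · simp
        exact (toZMod_eq_zero_iff _).mp h6
      · have hredL : red ((Phi b)^[L] Q') = red Q' := by
          rw [hredn L Q', hLM]
          exact iterate_fix φt M (red Q') hMfix' _
        exact dd_of_red_eq hredL
  obtain ⟨d, hd⟩ := hMdvdN
  refine ⟨d, ?_, by rw [hd, mul_comm]⟩
  have h6 : M * d ∣ M * r := by rw [← hd]; exact hkey
  exact (Nat.mul_dvd_mul_iff_left (by omega : 0 < M)).mp h6
end

section
/- Let K be the function field of a smooth curve (field with non-archimedean absolute values satisfying a product formula), let f ∈ K[z] be monic of degree d ≥ 3, let φ(x,y) = (y, x + f(y)), and let s ≥ 1 be the number of places v ∈ M_K with ρ_v(f) > 1. If ρ_v(f) > 1 for at least one place (φ not isotrivial), then the number of points P ∈ K² with ĥ_φ(P) = 0 is at most (3d⁶)^s, where ĥ_φ(P) = Σ_v (λ⁺_v(P) + λ⁻_v(P)) is the canonical height. In particular, ĥ_φ(P) = 0 if and only if P is periodic for φ, and φ has at most (3d⁶)^s periodic points in K². -/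
open Polynomial Filter

section ListHelpers

lemma list_one_le_prod (l : List ℝ) (h : ∀ x ∈ l, 1 ≤ x) : 1 ≤ l.prod := by
  induction l with
  | nil => simp
  | cons a t ih =>
    simp only [List.prod_cons]
    have ha := h a (by simp)
    have ht := ih (fun x hx => h x (by simp [hx]))
    nlinarith

lemma list_all_eq_one_of_prod_le_one (l : List ℝ) (h : ∀ x ∈ l, 1 ≤ x)
    (hp : l.prod ≤ 1) : ∀ x ∈ l, x = 1 := by
  induction l with
  | nil => simp
  | cons a t ih =>
    simp only [List.prod_cons] at hp
    have ha := h a (by simp)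
    have ht := list_one_le_prod t (fun x hx => h x (by simp [hx]))
    have ha' : a ≤ 1 := by nlinarith
    have haa : a = 1 := le_antisymm ha' ha
    intro x hx
    rcases List.mem_cons.mp hx with rfl | hx
    · exact haa
    · exact ih (fun x hx => h x (by simp [hx])) (by nlinarith) x hx

lemma list_one_lt_prod (l : List ℝ) (hne : l ≠ []) (h : ∀ x ∈ l, 1 < x) : 1 < l.prod := by
  induction l with
  | nil => simp at hne
  | cons a t ih =>
    simp only [List.prod_cons]
    have ha := h a (by simp)
    rcases eq_or_ne t [] with rfl | ht
    · simpa using ha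
    · have := ih ht (fun x hx => h x (by simp [hx]))
      nlinarith

lemma list_prod_eq_pow (l : List ℝ) (r : ℝ) (h : ∀ x ∈ l, x = r) :
    l.prod = r ^ l.length := by
  induction l with
  | nil => simp
  | cons a t ih =>
    simp only [List.prod_cons, List.length_cons, pow_succ]
    rw [h a (by simp), ih (fun x hx => h x (by simp [hx]))]
    ring

end ListHelpers
open Polynomial Filter

section NA
variable {L : Type*} [Field L] (w : AbsoluteValue L ℝ)

lemma na_sub_le (hna : IsNonarchimedean w) (a b : L) :
    w (a - b) ≤ max (w a) (w b) := by
  have := hna a (-b)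
  simpa [sub_eq_add_neg] using this

/-- isoceles: if w b < w a then w (a + b) = w a -/
lemma na_add_eq_left (hna : IsNonarchimedean w) {a b : L} (h : w b < w a) :
    w (a + b) = w a := by
  refine le_antisymm ((hna a b).trans (by simp [le_of_lt h])) ?_
  have h2 : w a ≤ max (w (a + b)) (w b) := by
    have := na_sub_le w hna (a + b) b
    simpa using this
  rcases max_cases (w (a + b)) (w b) with ⟨he, _⟩ | ⟨he, _⟩
  · rw [he] at h2; exact h2
  · rw [he] at h2; linarith

lemma na_sub_eq_left (hna : IsNonarchimedean w) {a b : L} (h : w b < w a) :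
    w (a - b) = w a := by
  have : w (-b) < w a := by simpa using h
  simpa [sub_eq_add_neg] using na_add_eq_left w hna this

lemma w_sub_comm (a b : L) : w (a - b) = w (b - a) := by
  rw [← w.map_neg]; ring_nf

/-- nonarchimedean criterion via natCast bound -/
lemma na_of_natCast (h : ∀ n : ℕ, w (n : L) ≤ 1) : IsNonarchimedean w := by
  -- first reduce to: ∀ x, w (x+1) ≤ max (w x) 1
  have key : ∀ x : L, w (x + 1) ≤ max (w x) 1 := by
    intro x
    rw [max_comm]
    refine le_of_forall_gt_imp_ge_of_dense fun a ha => ?_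
    have ha' : 1 < a := (max_lt_iff.mp ha).left
    have hM : (0:ℝ) < max 1 (w x) := lt_of_lt_of_le one_pos (le_max_left _ _)
    obtain ⟨m, hm⟩ : ∃ m : ℕ, ((m : ℝ) + 1) < (a / max 1 (w x)) ^ m := by
      apply Real.exists_natCast_add_one_lt_pow_of_one_lt
      rw [one_lt_div hM]
      exact ha
    have hm0 : m ≠ 0 := by
      rintro rfl
      simp at hm
    rw [div_pow, lt_div_iff₀ (by positivity)] at hm
    -- binomial bound : w (x+1)^m ≤ (m+1) * (max 1 (w x))^m
    have hbin : w (x + 1) ^ m ≤ ((m : ℝ) + 1) * (max 1 (w x)) ^ m := by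
      rw [← w.map_pow]
      have hexp : (x + 1) ^ m = ∑ k ∈ Finset.range (m + 1),
          x ^ k * 1 ^ (m - k) * (m.choose k : L) := add_pow x 1 m
      rw [hexp]
      calc w (∑ k ∈ Finset.range (m + 1), x ^ k * 1 ^ (m - k) * (m.choose k : L))
          ≤ ∑ k ∈ Finset.range (m + 1), w (x ^ k * 1 ^ (m - k) * (m.choose k : L)) :=
            w.sum_le _ _
        _ ≤ ∑ k ∈ Finset.range (m + 1), (max 1 (w x)) ^ m := by
            refine Finset.sum_le_sum fun k hk => ?_
            have hk' : k ≤ m := Nat.lt_succ_iff.mp (Finset.mem_range.mp hk)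
            rw [one_pow, mul_one, w.map_mul, w.map_pow]
            have h1 : w x ^ k ≤ (max 1 (w x)) ^ k :=
              pow_le_pow_left₀ (w.nonneg x) (le_max_right _ _) k
            have h2 : (max 1 (w x)) ^ k ≤ (max 1 (w x)) ^ m :=
              pow_le_pow_right₀ (le_max_left _ _) hk'
            have h3 : w ((m.choose k : ℕ) : L) ≤ 1 := h _
            have h4 : (0:ℝ) ≤ (max 1 (w x)) ^ m := by positivity
            calc w x ^ k * w ((m.choose k : ℕ) : L) ≤ w x ^ k * 1 := by
                  refine mul_le_mul_of_nonneg_left h3 (by positivity)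
              _ = w x ^ k := mul_one _
              _ ≤ (max 1 (w x)) ^ m := le_trans h1 h2
        _ = ((m : ℝ) + 1) * (max 1 (w x)) ^ m := by
            rw [Finset.sum_const, Finset.card_range]
            push_cast
            ring
    have : w (x + 1) ^ m ≤ a ^ m := le_trans hbin (le_of_lt hm)
    exact le_of_pow_le_pow_left₀ hm0 (by positivity) this
  -- now the general statement
  intro x y
  rcases eq_or_ne y 0 with rfl | hy
  · simpa using le_max_left (w x) (w 0)
  · have hwy : 0 < w y := w.pos hy
    have hxy : x + y = (x / y + 1) * y := by field_simp
    rw [hxy, w.map_mul]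
    calc w (x / y + 1) * w y ≤ max (w (x / y)) 1 * w y := by
          exact mul_le_mul_of_nonneg_right (key _) (le_of_lt hwy)
      _ = max (w (x / y) * w y) (w y) := by
          rw [max_mul_of_nonneg _ _ (le_of_lt hwy), one_mul]
      _ = max (w x) (w y) := by
          rw [map_div₀, div_mul_cancel₀ _ (ne_of_gt hwy)]

end NA
section Grow

/-- core one-directional growth -/
lemma grow_core (a : ℤ → ℝ) (R : ℝ) (hR : 1 ≤ R) (D : ℕ) (hD : 2 ≤ D)
    (hstep : ∀ n : ℤ, R < a n → (a n) ^ D ≤ max (a (n + 1)) (a (n - 1)))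
    (m : ℤ) (hm : R < a m) (hm1 : (a m) ^ D ≤ a (m + 1)) :
    ∀ k : ℕ, (a m) ^ (D ^ k) ≤ a (m + k) ∧ R < a (m + k) ∧ (a (m + k)) ^ D ≤ a (m + k + 1) := by
  have ham1 : 1 < a m := lt_of_le_of_lt hR hm
  intro k
  induction k with
  | zero => simpa using ⟨hm, hm1⟩
  | succ k ih =>
    obtain ⟨h1, h2, h3⟩ := ih
    have hc : (m : ℤ) + ((k + 1 : ℕ) : ℤ) = m + k + 1 := by push_cast; ring
    rw [hc]
    have hak1 : 1 < a (m + k) := lt_of_le_of_lt hR h2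
    have hstep1 : a (m + k) < a (m + k + 1) := by
      calc a (m + k) < (a (m + k)) ^ D := by
            nlinarith [one_lt_pow₀ hak1 (by omega : D ≠ 0), pow_le_pow_right₀ (le_of_lt hak1) hD]
        _ ≤ a (m + k + 1) := h3
    have e1 : (a m) ^ (D ^ (k + 1)) ≤ a (m + k + 1) := by
      have haux : ((a m) ^ (D ^ k)) ^ D ≤ (a (m + k)) ^ D := by
        apply pow_le_pow_left₀ (by positivity) h1
      rw [← pow_mul, ← pow_succ] at haux
      exact le_trans haux h3
    have e2 : R < a (m + k + 1) := lt_trans h2 hstep1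
    have e3 : (a (m + k + 1)) ^ D ≤ a (m + k + 1 + 1) := by
      have hmax := hstep (m + k + 1) e2
      rcases max_cases (a (m + k + 1 + 1)) (a (m + k + 1 - 1)) with ⟨he, _⟩ | ⟨he, _⟩
      · rw [he] at hmax; exact hmax
      · exfalso
        rw [he] at hmax
        have hsimp : m + (k:ℤ) + 1 - 1 = m + (k:ℤ) := by ring
        rw [hsimp] at hmax
        have hlt : a (m+k) < (a (m+k+1)) ^ D := by
          calc a (m+k) < a (m+k+1) := hstep1
            _ ≤ (a (m+k+1)) ^ D := by
                nlinarith [pow_le_pow_right₀ (le_of_lt (lt_of_le_of_lt hR e2))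
                  (by omega : 1 ≤ D), pow_one (a (m+k+1))]
        linarith
    exact ⟨e1, e2, e3⟩

/-- main escape: from any over-threshold value, doubly exponential growth forward or backward,
starting from a natural index -/
lemma grow_main (a : ℤ → ℝ) (R : ℝ) (hR : 1 ≤ R) (D : ℕ) (hD : 2 ≤ D)
    (hstep : ∀ n : ℤ, R < a n → (a n) ^ D ≤ max (a (n + 1)) (a (n - 1)))
    (m : ℤ) (hm : R < a m) :
    (∃ B : ℝ, 1 < B ∧ ∃ m₂ : ℕ, ∀ k : ℕ, B ^ (D ^ k) ≤ a ((m₂ : ℤ) + k)) ∨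
    (∃ B : ℝ, 1 < B ∧ ∃ m₂ : ℕ, ∀ k : ℕ, B ^ (D ^ k) ≤ a (-((m₂ : ℤ) + k))) := by
  have ham1 : 1 < a m := lt_of_le_of_lt hR hm
  have hstart := hstep m hm
  -- helper: shift a one-directional growth to a ℕ start
  have shift : ∀ (b : ℤ → ℝ) (m' : ℤ), R < b m' → ((b m') ^ D ≤ b (m' + 1)) →
      (∀ n : ℤ, R < b n → (b n) ^ D ≤ max (b (n + 1)) (b (n - 1))) →
      ∃ B : ℝ, 1 < B ∧ ∃ m₂ : ℕ, ∀ k : ℕ, B ^ (D ^ k) ≤ b ((m₂ : ℤ) + k) := by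
    intro b m' hm' hm1' hstep'
    have hb1 : 1 < b m' := lt_of_le_of_lt hR hm'
    have H := grow_core b R hR D hD hstep' m' hm' hm1'
    refine ⟨b m', hb1, m'.toNat, fun k => ?_⟩
    have hmle : m' ≤ (m'.toNat : ℤ) := Int.self_le_toNat m'
    set j : ℕ := ((m'.toNat : ℤ) - m').toNat + k with hj
    have hjc : (m'.toNat : ℤ) + k = m' + j := by
      have : (((m'.toNat : ℤ) - m').toNat : ℤ) = (m'.toNat : ℤ) - m' :=
        Int.toNat_of_nonneg (by omega)
      push_cast [hj]
      omega
    rw [hjc]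
    have hkj : k ≤ j := by omega
    have hDk : D ^ k ≤ D ^ j := pow_le_pow_right₀ (by omega) hkj
    calc (b m') ^ (D ^ k) ≤ (b m') ^ (D ^ j) :=
          pow_le_pow_right₀ (le_of_lt hb1) hDk
      _ ≤ b (m' + j) := (H j).1
  rcases max_cases (a (m + 1)) (a (m - 1)) with ⟨he, _⟩ | ⟨he, _⟩
  · left
    exact shift a m hm (by rw [← he]; exact hstart) hstep
  · right
    set b : ℤ → ℝ := fun n => a (-n) with hb
    have hstep'' : ∀ n : ℤ, R < b n → (b n) ^ D ≤ max (b (n + 1)) (b (n - 1)) := by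
      intro n hn
      have hh := hstep (-n) hn
      rw [max_comm] at hh
      have e1 : b (n + 1) = a (-n - 1) := by simp only [hb]; ring_nf
      have e2 : b (n - 1) = a (-n + 1) := by simp only [hb]; ring_nf
      rw [e1, e2]
      exact hh
    have hbm : R < b (-m) := by simpa [hb] using hm
    have hbm1 : (b (-m)) ^ D ≤ b (-m + 1) := by
      have : b (-m + 1) = a (m - 1) := by simp only [hb]; ring_nf
      rw [this]
      simp only [hb, neg_neg]
      rw [← he]; exact hstart
    obtain ⟨B, hB, m₂, hgrow⟩ := shift b (-m) hbm hbm1 hstep''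
    exact ⟨B, hB, m₂, fun k => by simpa [hb] using hgrow k⟩

end Grow
section CLSdefs
variable {L : Type*} [Field L] [DecidableEq L]
noncomputable def Gpoly (lst : List L) (ζs : L) (s : Bool) : L[X] :=
  (Multiset.map (fun ζ => X - C ζ) (↑(lst.erase ζs) : Multiset L)).prod
    + C (if s then 1 else -1)
lemma prodpoly_monic (l : List L) :
    (Multiset.map (fun ζ => X - C ζ) (↑l : Multiset L)).prod.Monic :=
  Polynomial.monic_multiset_prod_of_monic _ _ (fun ζ _ => monic_X_sub_C ζ)
lemma prodpoly_natDegree (l : List L) :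
    (Multiset.map (fun ζ => X - C ζ) (↑l : Multiset L)).prod.natDegree = l.length := by
  rw [Polynomial.natDegree_multiset_prod_of_monic _ (fun f hf => by
    obtain ⟨ζ, _, rfl⟩ := Multiset.mem_map.mp hf
    exact monic_X_sub_C ζ)]
  rw [Multiset.map_map]
  have : (Multiset.map (natDegree ∘ fun ζ => X - C ζ) (↑l : Multiset L))
      = Multiset.map (fun _ => 1) (↑l : Multiset L) := by
    apply Multiset.map_congr rfl
    intro x _
    simp [natDegree_X_sub_C]
  rw [this, Multiset.map_const', Multiset.sum_replicate, smul_eq_mul, mul_one]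
  simp
lemma Gpoly_natDegree (lst : List L) (ζs : L) (s : Bool) :
    (Gpoly lst ζs s).natDegree = (lst.erase ζs).length := by
  unfold Gpoly
  rw [natDegree_add_C, prodpoly_natDegree]
lemma Gpoly_monic (lst : List L) (ζs : L) (hs : ζs ∈ lst) (hlen : 2 ≤ lst.length) (s : Bool) :
    (Gpoly lst ζs s).Monic := by
  have h1 := prodpoly_monic (lst.erase ζs)
  apply h1.add_of_left
  refine lt_of_le_of_lt (degree_C_le) ?_
  rw [degree_eq_natDegree h1.ne_zero, prodpoly_natDegree]
  have h2 : 1 ≤ (lst.erase ζs).length := by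
    rw [List.length_erase_of_mem hs]
    omega
  exact_mod_cast Nat.zero_lt_of_lt h2
lemma Gpoly_eval (lst : List L) (ζs : L) (s : Bool) (u : L) :
    (Gpoly lst ζs s).eval u
      = ((lst.erase ζs).map (fun ζ => u - ζ)).prod + (if s then 1 else -1) := by
  unfold Gpoly
  rw [eval_add, eval_C, eval_multiset_prod, Multiset.map_map]
  congr 1
  have h1 : (Multiset.map (eval u ∘ fun ζ => X - C ζ) (↑(lst.erase ζs) : Multiset L))
      = (↑((lst.erase ζs).map (fun ζ => u - ζ)) : Multiset L) := by
    rw [← Multiset.map_coe]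
    apply Multiset.map_congr rfl
    intro x _
    simp [Function.comp]
  rw [h1, Multiset.prod_coe]
end CLSdefs

section EvalRoots
variable {L : Type*} [Field L] [IsAlgClosed L]

/-- any monic polynomial evaluated: absolute value of eval = product over roots -/
lemma w_eval_eq_prod_roots (w : AbsoluteValue L ℝ) (p : L[X]) (hp : p.Monic) (u : L) :
    w (p.eval u) = (p.roots.toList.map (fun β => w (u - β))).prod := by
  have hsp : p.Splits := IsAlgClosed.splits p
  have hfac := hsp.eq_prod_roots_of_monic hp
  conv_lhs => rw [hfac]
  rw [eval_multiset_prod, Multiset.map_map]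
  have h1 : (Multiset.map (eval u ∘ fun a => X - C a) p.roots)
      = (↑(p.roots.toList.map (fun β => u - β)) : Multiset L) := by
    conv_lhs => rw [← Multiset.coe_toList p.roots]
    rw [Multiset.map_coe]
    congr 1
    apply List.map_congr_left
    intro x _
    simp [Function.comp]
  rw [h1, Multiset.prod_coe]
  rw [map_list_prod w, List.map_map]
  congr 1

/-- if w(p.eval u) < 1 for monic p, some root is within distance < 1 -/
lemma exists_root_close (w : AbsoluteValue L ℝ) (p : L[X]) (hp : p.Monic) (u : L)
    (h : w (p.eval u) < 1) : ∃ β ∈ p.roots, w (u - β) < 1 := by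
  by_contra hc
  push_neg at hc
  have h2 : 1 ≤ (p.roots.toList.map (fun β => w (u - β))).prod := by
    apply list_one_le_prod
    intro x hx
    obtain ⟨β, hβ, rfl⟩ := List.mem_map.mp hx
    exact hc β (Multiset.mem_toList.mp hβ)
  rw [w_eval_eq_prod_roots w p hp u] at h
  linarith

end EvalRoots

section MainCLS
variable {L : Type*} [Field L] [IsAlgClosed L] [DecidableEq L]

/-- pull one factor out of a mapped list product (commutative monoid target) -/
lemma map_prod_erase {M : Type*} [CommMonoid M] (l : List L) (g : L → M) {a : L} (ha : a ∈ l) :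
    (l.map g).prod = g a * ((l.erase a).map g).prod := by
  have hperm : l.Perm (a :: l.erase a) := List.perm_cons_erase ha
  have := (hperm.map g).prod_eq
  simpa using this

/-- KEY local classification: every coordinate of a two-sided bounded orbit (at a place
with root gap ρ > 1) is within open distance 1 of a root of f or of a root of Gpoly. -/
lemma CLS (w : AbsoluteValue L ℝ) (hna : IsNonarchimedean ⇑w)
    (lst : List L) (hlen : 2 ≤ lst.length)
    (ρ : ℝ) (hρ1 : 1 < ρ)
    (hat : ∃ ζ ∈ lst, ∃ ζ' ∈ lst, w (ζ - ζ') = ρ)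
    (z : ℤ → L)
    (hrec : ∀ n : ℤ, z (n+1) - z (n-1) = (lst.map (fun ζ => z n - ζ)).prod)
    (hbnd : ∀ n : ℤ, ∀ ζ ∈ lst, w (z n - ζ) ≤ ρ)
    (hbnd2 : ∀ n m : ℤ, w (z n - z m) ≤ ρ)
    (n : ℤ) :
    (∃ ζ ∈ lst, w (z n - ζ) < 1) ∨
    (∃ ζs ∈ lst, ∃ s : Bool, ∃ β ∈ (Gpoly lst ζs s).roots, w (z n - β) < 1) := by
  have hρ0 : (0:ℝ) < ρ := lt_trans one_pos hρ1
  -- the w-product bound at every index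
  have hprodb : ∀ m : ℤ, (lst.map (fun ζ => w (z m - ζ))).prod ≤ ρ := by
    intro m
    have h1 : w (z (m+1) - z (m-1)) = (lst.map (fun ζ => w (z m - ζ))).prod := by
      rw [hrec m, map_list_prod w, List.map_map]
      rfl
    rw [← h1]
    exact hbnd2 _ _
  -- at every index there is a root at distance ≥ ρ
  have hbig : ∀ m : ℤ, ∃ ζ ∈ lst, ρ ≤ w (z m - ζ) := by
    intro m
    obtain ⟨ζa, ha, ζb, hb, hab⟩ := hat
    have h1 : ρ ≤ max (w (z m - ζa)) (w (z m - ζb)) := by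
      have h2 : w (ζa - ζb) ≤ max (w (ζa - z m)) (w (z m - ζb)) := by
        have : ζa - ζb = (ζa - z m) + (z m - ζb) := by ring
        rw [this]
        exact hna _ _
      rw [hab, w_sub_comm w ζa (z m)] at h2
      exact h2
    rcases le_max_iff.mp h1 with h | h
    · exact ⟨ζa, ha, h⟩
    · exact ⟨ζb, hb, h⟩
  -- far exclusion: at every index some root is within distance ≤ 1
  have hfar : ∀ m : ℤ, ∃ ζ ∈ lst, w (z m - ζ) ≤ 1 := by
    intro m
    by_contra hc
    push_neg at hc
    obtain ⟨ζ0, hζ0, hρζ0⟩ := hbig m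
    have hsplit : (lst.map (fun ζ => w (z m - ζ))).prod
        = w (z m - ζ0) * ((lst.erase ζ0).map (fun ζ => w (z m - ζ))).prod := by
      simpa using map_prod_erase lst (fun ζ => w (z m - ζ)) hζ0
    have herasene : (lst.erase ζ0).map (fun ζ => w (z m - ζ)) ≠ [] := by
      simp only [ne_eq, List.map_eq_nil_iff]
      intro hnil
      have := List.length_erase_of_mem hζ0
      rw [hnil] at this
      simp at this
      omega
    have hrest : 1 < ((lst.erase ζ0).map (fun ζ => w (z m - ζ))).prod := by
      apply list_one_lt_prod _ herasene
      intro x hx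
      obtain ⟨ζ, hζ, rfl⟩ := List.mem_map.mp hx
      exact hc ζ (List.erase_subset hζ)
    have hpp := hprodb m
    rw [hsplit] at hpp
    nlinarith
  -- main case split
  by_cases hgood : ∃ ζ ∈ lst, w (z n - ζ) < 1
  · exact Or.inl hgood
  push_neg at hgood
  right
  -- bad case analysis
  obtain ⟨ζs, hζs, hρs⟩ := hbig n
  have hζseq : w (z n - ζs) = ρ := le_antisymm (hbnd n ζs hζs) hρs
  -- all other factors are exactly 1
  have hW' : ((lst.erase ζs).map (fun ζ => w (z n - ζ))).prod ≤ 1 := by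
    have hsplit : (lst.map (fun ζ => w (z n - ζ))).prod
        = w (z n - ζs) * ((lst.erase ζs).map (fun ζ => w (z n - ζ))).prod := by
      simpa using map_prod_erase lst (fun ζ => w (z n - ζ)) hζs
    have hpp := hprodb n
    rw [hsplit, hζseq] at hpp
    nlinarith
  have hothers : ∀ ζ ∈ lst.erase ζs, w (z n - ζ) = 1 := by
    intro ζ hζ
    have h1 : ∀ x ∈ (lst.erase ζs).map (fun ζ => w (z n - ζ)), 1 ≤ x := by
      intro x hx
      obtain ⟨ζ', hζ', rfl⟩ := List.mem_map.mp hx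
      exact hgood ζ' (List.erase_subset hζ')
    have := list_all_eq_one_of_prod_le_one _ h1 hW' (w (z n - ζ))
      (List.mem_map.mpr ⟨ζ, hζ, rfl⟩)
    exact this
  have hvals : ∀ ζ ∈ lst, ζ ≠ ζs → w (z n - ζ) = 1 := by
    intro ζ hζ hne
    exact hothers ζ ((List.mem_erase_of_ne hne).mpr hζ)
  -- the full product value is exactly ρ
  have hprodeq : (lst.map (fun ζ => w (z n - ζ))).prod = ρ := by
    have hsplit : (lst.map (fun ζ => w (z n - ζ))).prod
        = w (z n - ζs) * ((lst.erase ζs).map (fun ζ => w (z n - ζ))).prod := by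
      simpa using map_prod_erase lst (fun ζ => w (z n - ζ)) hζs
    rw [hsplit, hζseq]
    have h1 : ((lst.erase ζs).map (fun ζ => w (z n - ζ))).prod = 1 := by
      have hge := list_one_le_prod ((lst.erase ζs).map (fun ζ => w (z n - ζ))) (by
        intro x hx
        obtain ⟨ζ', hζ', rfl⟩ := List.mem_map.mp hx
        exact hgood ζ' (List.erase_subset hζ'))
      linarith
    rw [h1, mul_one]
  have hneighbor : w (z (n+1) - z (n-1)) = ρ := by
    rw [hrec n, map_list_prod w, List.map_map]
    exact hprodeq
  -- neighbors: exactly one is close to ζs ("B-side")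
  have hAchain : ∀ x : L, (∃ ζx ∈ lst, w (x - ζx) ≤ 1) → ¬ (w (x - ζs) ≤ 1) →
      w (x - z n) ≤ 1 := by
    intro x hx hnB
    obtain ⟨ζx, hζx, hxd⟩ := hx
    have hne : ζx ≠ ζs := by
      rintro rfl
      exact hnB hxd
    have h2 : w (ζx - z n) = 1 := by rw [w_sub_comm]; exact hvals ζx hζx hne
    have : x - z n = (x - ζx) + (ζx - z n) := by ring
    rw [this]
    calc w ((x - ζx) + (ζx - z n)) ≤ max (w (x - ζx)) (w (ζx - z n)) := hna _ _
      _ ≤ 1 := by rw [h2]; exact max_le hxd le_rfl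
  have hnotboth : ¬ (w (z (n+1) - ζs) ≤ 1 ∧ w (z (n-1) - ζs) ≤ 1) := by
    rintro ⟨h1, h2⟩
    have : w (z (n+1) - z (n-1)) ≤ 1 := by
      have he : z (n+1) - z (n-1) = (z (n+1) - ζs) - (z (n-1) - ζs) := by ring
      rw [he]
      calc w ((z (n+1) - ζs) - (z (n-1) - ζs))
          ≤ max (w (z (n+1) - ζs)) (w (z (n-1) - ζs)) := na_sub_le w hna _ _
        _ ≤ 1 := max_le h1 h2
    rw [hneighbor] at this
    linarith
  have hnotneither : ¬ (¬ w (z (n+1) - ζs) ≤ 1 ∧ ¬ w (z (n-1) - ζs) ≤ 1) := by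
    rintro ⟨h1, h2⟩
    have ha1 : w (z (n+1) - z n) ≤ 1 := hAchain _ (hfar (n+1)) h1
    have ha2 : w (z (n-1) - z n) ≤ 1 := hAchain _ (hfar (n-1)) h2
    have : w (z (n+1) - z (n-1)) ≤ 1 := by
      have he : z (n+1) - z (n-1) = (z (n+1) - z n) - (z (n-1) - z n) := by ring
      rw [he]
      calc w ((z (n+1) - z n) - (z (n-1) - z n))
          ≤ max (w (z (n+1) - z n)) (w (z (n-1) - z n)) := na_sub_le w hna _ _
        _ ≤ 1 := max_le ha1 ha2
    rw [hneighbor] at this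
    linarith
  -- now produce the Gpoly root
  have hzsne : z n - ζs ≠ 0 := by
    intro h0
    rw [h0] at hζseq
    simp at hζseq
    linarith
  -- prod in L pulled apart
  have hLsplit : (lst.map (fun ζ => z n - ζ)).prod
      = (z n - ζs) * ((lst.erase ζs).map (fun ζ => z n - ζ)).prod :=
    map_prod_erase lst (fun ζ => z n - ζ) hζs
  set Pp : L := ((lst.erase ζs).map (fun ζ => z n - ζ)).prod with hPp
  -- helper finishing move
  have finish : ∀ s : Bool, w ((Gpoly lst ζs s).eval (z n)) < 1 →
      ∃ ζs' ∈ lst, ∃ s' : Bool, ∃ β ∈ (Gpoly lst ζs' s').roots, w (z n - β) < 1 := by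
    intro s hs
    obtain ⟨β, hβ, hβd⟩ := exists_root_close w _ (Gpoly_monic lst ζs hζs hlen s) _ hs
    exact ⟨ζs, hζs, s, β, hβ, hβd⟩
  by_cases hB : w (z (n+1) - ζs) ≤ 1
  · -- forward neighbor is B-side : b' = z (n+1), a' = z (n-1)
    have hnB2 : ¬ w (z (n-1) - ζs) ≤ 1 := fun h => hnotboth ⟨hB, h⟩
    have ha' : w (z (n-1) - z n) ≤ 1 := hAchain _ (hfar (n-1)) hnB2
    -- equation: (z n - ζs) * Pp = z(n+1) - z(n-1) = -(z n - ζs) + e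
    set e : L := (z (n+1) - ζs) + (z n - z (n-1)) with he
    have hkey : (z n - ζs) * Pp = -(z n - ζs) + e := by
      rw [← hLsplit, ← hrec n, he]
      ring
    have hPeq : Pp + 1 = e / (z n - ζs) := by
      field_simp
      linear_combination hkey
    have hwe : w e ≤ 1 := by
      rw [he]
      calc w ((z (n+1) - ζs) + (z n - z (n-1))) ≤ max (w (z (n+1) - ζs)) (w (z n - z (n-1))) :=
            hna _ _
        _ ≤ 1 := by
            refine max_le hB ?_
            rw [w_sub_comm]
            exact ha'
    have hfin : w (Pp + 1) < 1 := by
      rw [hPeq, map_div₀, hζseq, div_lt_one hρ0]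
      linarith
    apply finish true
    rw [Gpoly_eval]
    rw [hPp] at hfin
    simpa using hfin
  · have hB2 : w (z (n-1) - ζs) ≤ 1 := by
      by_contra h
      exact hnotneither ⟨hB, h⟩
    have ha' : w (z (n+1) - z n) ≤ 1 := hAchain _ (hfar (n+1)) hB
    set e : L := (z (n-1) - ζs) + (z n - z (n+1)) with he
    have hkey : (z n - ζs) * Pp = (z n - ζs) - e := by
      rw [← hLsplit, ← hrec n, he]
      ring
    have hPeq : Pp - 1 = -e / (z n - ζs) := by
      field_simp
      linear_combination hkey
    have hwe : w e ≤ 1 := by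
      rw [he]
      calc w ((z (n-1) - ζs) + (z n - z (n+1))) ≤ max (w (z (n-1) - ζs)) (w (z n - z (n+1))) :=
            hna _ _
        _ ≤ 1 := by
            refine max_le hB2 ?_
            rw [w_sub_comm]
            exact ha'
    have hfin : w (Pp - 1) < 1 := by
      rw [hPeq, map_div₀, w.map_neg, hζseq, div_lt_one hρ0]
      linarith
    apply finish false
    rw [Gpoly_eval]
    rw [hPp] at hfin
    simpa [sub_eq_add_neg] using hfin

end MainCLS

section Orbit
variable {K : Type*} [Field K] (φ φi : K × K → K × K)

noncomputable def oseq (P : K × K) (n : ℤ) : K :=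
  if 0 ≤ n then (φ^[n.toNat] P).2 else (φi^[(-n).toNat] P).2

variable (f : K[X])
variable (hφ : ∀ P, φ P = (P.2, P.1 + f.eval P.2))
variable (hφi : ∀ P, φi P = (P.2 - f.eval P.1, P.1))

include hφ hφi

lemma hinv1 : ∀ Q, φ (φi Q) = Q := by
  intro Q
  rw [hφi, hφ]
  simp

lemma hinv2 : ∀ Q, φi (φ Q) = Q := by
  intro Q
  rw [hφ, hφi]
  simp

omit hφ hφi

lemma oseq_nat (P : K × K) (N : ℕ) : oseq φ φi P (N : ℤ) = (φ^[N] P).2 := by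
  simp [oseq]

lemma oseq_zero (P : K × K) : oseq φ φi P 0 = P.2 := by
  simp [oseq]

lemma oseq_neg (P : K × K) (N : ℕ) : oseq φ φi P (-(N : ℤ)) = (φi^[N] P).2 := by
  rcases Nat.eq_zero_or_pos N with rfl | hN
  · simp [oseq]
  · have h1 : ¬ (0 ≤ -(N:ℤ)) := by omega
    simp only [oseq, h1, if_false, neg_neg, Int.toNat_natCast]

include hφi

lemma oseq_m1 (P : K × K) : oseq φ φi P (-1) = P.1 := by
  have h1 : (-1 : ℤ) = -((1:ℕ) : ℤ) := by norm_num
  rw [h1, oseq_neg]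
  simp [hφi P]

lemma fst_bwd (P : K × K) (N : ℕ) : (φi^[N] P).1 = oseq φ φi P (-(N:ℤ) - 1) := by
  have h1 : (-(N:ℤ) - 1) = -((N+1 : ℕ) : ℤ) := by push_cast; ring
  rw [h1, oseq_neg]
  rw [Function.iterate_succ_apply']
  rw [hφi]

include hφ

lemma fst_fwd (P : K × K) (N : ℕ) : (φ^[N] P).1 = oseq φ φi P ((N:ℤ) - 1) := by
  cases N with
  | zero =>
    simp only [Function.iterate_zero, id_eq, Nat.cast_zero, zero_sub]
    rw [oseq_m1 φ φi f hφi]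
  | succ N =>
    rw [Function.iterate_succ_apply', hφ]
    have h2 : ((N+1 : ℕ) : ℤ) - 1 = (N : ℤ) := by push_cast; ring
    rw [h2, oseq_nat]

/-- the fundamental second-order recurrence -/
lemma oseq_rec (P : K × K) (n : ℤ) :
    oseq φ φi P (n + 1) = oseq φ φi P (n - 1) + f.eval (oseq φ φi P n) := by
  rcases le_or_gt 0 n with hn | hn
  · -- forward region
    set N : ℕ := n.toNat with hN
    have hnN : n = (N : ℤ) := by omega
    have h1 : n + 1 = ((N + 1 : ℕ) : ℤ) := by omega
    have e1 : oseq φ φi P (n - 1) = (φ^[N] P).1 := by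
      rw [fst_fwd φ φi f hφ hφi]
      congr 1
      omega
    have e2 : oseq φ φi P n = (φ^[N] P).2 := by rw [hnN, oseq_nat]
    rw [h1, oseq_nat, Function.iterate_succ_apply', hφ, e1, e2]
  · -- backward region
    set M : ℕ := (-n - 1).toNat with hM
    have hnM : n = -(M:ℤ) - 1 := by omega
    set Q : K × K := φi^[M+1] P with hQ
    have hQ1 : Q.1 = oseq φ φi P (n - 1) := by
      rw [fst_bwd φ φi f hφi P (M+1)]
      congr 1
      push_cast
      omega
    have hQ2 : Q.2 = oseq φ φi P n := by
      rw [hQ]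
      rw [show n = -((M+1 : ℕ) : ℤ) by push_cast; omega]
      rw [oseq_neg]
    have hφQ : φ Q = φi^[M] P := by
      rw [hQ, Function.iterate_succ_apply']
      exact hinv1 φ φi f hφ hφi _
    have hLHS : oseq φ φi P (n + 1) = (φ Q).2 := by
      rw [show n + 1 = -((M:ℕ) : ℤ) by omega, oseq_neg, hφQ]
    rw [hLHS, hφ, hQ1, hQ2]

/-- shift: the orbit of φ P is the shifted orbit of P -/
lemma oseq_shift (P : K × K) (n : ℤ) :
    oseq φ φi (φ P) n = oseq φ φi P (n + 1) := by
  rcases le_or_gt 0 n with hn | hn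
  · set N : ℕ := n.toNat with hN
    have hnN : n = (N : ℤ) := by omega
    have h1 : ((N:ℤ)) + 1 = ((N + 1 : ℕ) : ℤ) := by push_cast; ring
    rw [hnN, h1, oseq_nat, oseq_nat, Function.iterate_succ_apply]
  · set M : ℕ := (-n - 1).toNat with hM
    have hnM : n = -((M+1:ℕ):ℤ) := by push_cast; omega
    have h1 : -((M+1:ℕ):ℤ) + 1 = -((M:ℕ):ℤ) := by push_cast; ring
    rw [hnM, h1, oseq_neg, oseq_neg, Function.iterate_succ_apply]
    rw [hinv2 φ φi f hφ hφi P]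

/-- iterates of the left inverse -/
lemma iter_inv (m : ℕ) (Q : K × K) : φi^[m] (φ^[m] Q) = Q := by
  induction m with
  | zero => simp
  | succ m ih =>
    rw [Function.iterate_succ_apply' φ, Function.iterate_succ_apply φi]
    rw [hinv2 φ φi f hφ hφi]
    exact ih

end Orbit

section GamDef

/-- the class data type: a root index, or (root index, sign, auxiliary root index) -/
abbrev Gam (d : ℕ) := Fin d ⊕ (Fin d × Bool × Fin d)

lemma Gam_card (d : ℕ) : Fintype.card (Gam d) = d + d * (2 * d) := by
  simp [Gam]

end GamDef

section LpPos

/-- abstract lemma: a limit of (1/d)^N * g N is positive given doubly-exponential growth -/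
lemma lp_pos_of_growth (d : ℕ) (hd : 2 ≤ d) (B : ℝ) (hB : 1 < B) (m₂ : ℕ) (lpv : ℝ)
    (g : ℕ → ℝ)
    (hge : ∀ k : ℕ, ((d ^ k : ℕ) : ℝ) * Real.log B ≤ g (m₂ + k))
    (hten : Filter.Tendsto (fun N : ℕ => ((d : ℝ)⁻¹) ^ N * g N) Filter.atTop (nhds lpv)) :
    0 < lpv := by
  have hdR : (1:ℝ) < (d:ℝ) := by exact_mod_cast (by omega : 1 < d)
  have hd0 : (0:ℝ) < (d:ℝ) := by linarith
  have hlogB : 0 < Real.log B := Real.log_pos hB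
  set ε : ℝ := Real.log B / (d:ℝ)^m₂ with hε
  have hε0 : 0 < ε := by positivity
  have hev : ∀ N, m₂ ≤ N → ε ≤ ((d : ℝ)⁻¹) ^ N * g N := by
    intro N hN
    have hk := hge (N - m₂)
    rw [show m₂ + (N - m₂) = N by omega] at hk
    have h2 : ((d:ℝ)⁻¹) ^ N * (((d ^ (N - m₂) : ℕ) : ℝ) * Real.log B) = ε := by
      rw [hε, inv_pow]
      rw [show (d:ℝ)^N = (d:ℝ)^m₂ * (d:ℝ)^(N - m₂) by
        rw [← pow_add]; congr 1; omega]
      push_cast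
      field_simp
    calc ε = ((d:ℝ)⁻¹) ^ N * (((d ^ (N - m₂) : ℕ) : ℝ) * Real.log B) := h2.symm
      _ ≤ ((d:ℝ)⁻¹) ^ N * g N := by
          apply mul_le_mul_of_nonneg_left hk
          positivity
  have hle : ε ≤ lpv :=
    ge_of_tendsto hten (Filter.eventually_atTop.mpr ⟨m₂, hev⟩)
  linarith

end LpPos

/-- Theorem 1.2, quantitative form: over a function field (product
formula field with non-archimedean places), for a non-isotrivial Hénon map
`φ(x,y) = (y, x+f(y))` with `f` monic of degree `d ≥ 3` and `s ≥ 1` places where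
`ρ_v(f) > 1`, the set of points of canonical height zero has at most `(3d⁶)^s`
elements; moreover canonical height zero is equivalent to periodicity, so `φ` has
at most `(3d⁶)^s` periodic points. -/
theorem stmt16 {K : Type*} [Field K] {ι : Type*}
    (v : ι → AbsoluteValue K ℝ) (hna : ∀ i, IsNonarchimedean (v i))
    (hnontriv : ∀ i, ∃ x : K, x ≠ 0 ∧ v i x ≠ 1)
    (hprod : ∀ x : K, x ≠ 0 →
      (Function.mulSupport fun i => v i x).Finite ∧ ∏ᶠ i, v i x = 1)
    {L : Type*} [Field L] [Algebra K L] [IsAlgClosure K L]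
    (w : ι → AbsoluteValue L ℝ)
    (hw : ∀ (i) (x : K), w i (algebraMap K L x) = v i x)
    (d : ℕ) (hd : 3 ≤ d) (f : K[X]) (hmonic : f.Monic) (hdeg : f.natDegree = d)
    (φ φi : K × K → K × K)
    (hφ : ∀ P, φ P = (P.2, P.1 + f.eval P.2))
    (hφi : ∀ P, φi P = (P.2 - f.eval P.1, P.1))
    (S : Set ι)
    (hS : S = {i | ∃ ζ₁ ζ₂ : L, (f.map (algebraMap K L)).eval ζ₁ = 0 ∧
      (f.map (algebraMap K L)).eval ζ₂ = 0 ∧ 1 < w i (ζ₁ - ζ₂)})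
    (hSfin : S.Finite) (s : ℕ) (hs : S.ncard = s) (hs1 : 1 ≤ s)
    (lp lm : ι → K × K → ℝ)
    (hlp : ∀ (i : ι) (P : K × K), Tendsto (fun N : ℕ => ((d : ℝ)⁻¹) ^ N *
      Real.log (max (max (v i (φ^[N] P).1) (v i (φ^[N] P).2)) 1)) atTop
      (nhds (lp i P)))
    (hlm : ∀ (i : ι) (P : K × K), Tendsto (fun N : ℕ => ((d : ℝ)⁻¹) ^ N *
      Real.log (max (max (v i (φi^[N] P).1) (v i (φi^[N] P).2)) 1)) atTop
      (nhds (lm i P)))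
    (hfin : ∀ P : K × K, (Function.support fun i => lp i P + lm i P).Finite)
    (hgt : K × K → ℝ) (hhgt : ∀ P, hgt P = ∑ᶠ i, (lp i P + lm i P)) :
    {P : K × K | hgt P = 0}.ncard ≤ (3 * d ^ 6) ^ s ∧
    (∀ P : K × K, hgt P = 0 ↔ ∃ n : ℕ, 1 ≤ n ∧ φ^[n] P = P) ∧
    {P : K × K | ∃ n : ℕ, 1 ≤ n ∧ φ^[n] P = P}.ncard ≤ (3 * d ^ 6) ^ s := by
  classical
  haveI : IsAlgClosed L := IsAlgClosure.isAlgClosed K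
  set ι₀ : K →+* L := (algebraMap K L : K →+* L) with hι₀
  have hweq : ∀ (i : ι) (x : K), w i (ι₀ x) = v i x := hw
  -- d basics
  have hd0 : 0 < d := by omega
  have hd2 : 2 ≤ d := by omega
  have hdR1 : (1:ℝ) < (d:ℝ) := by exact_mod_cast (by omega : 1 < d)
  -- w is nonarchimedean
  have hvnat : ∀ (i : ι) (n : ℕ), v i (n : K) ≤ 1 := by
    intro i n
    induction n with
    | zero => simp
    | succ n ih =>
      have h1 := hna i (n : K) 1
      push_cast
      calc v i ((n:K) + 1) ≤ max (v i (n:K)) (v i 1) := h1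
        _ ≤ 1 := by rw [(v i).map_one]; exact max_le ih le_rfl
  have hwna : ∀ i, IsNonarchimedean ⇑(w i) := by
    intro i
    apply na_of_natCast
    intro n
    rw [show ((n : ℕ) : L) = ι₀ ((n : ℕ) : K) from (map_natCast ι₀ n).symm, hweq]
    exact hvnat i n
  -- the polynomial over L and its roots
  set fb : L[X] := f.map ι₀ with hfb
  have hfbm : fb.Monic := hmonic.map ι₀
  have hfbdeg : fb.natDegree = d := by
    rw [hfb, natDegree_map, hdeg]
  have hfb0 : fb ≠ 0 := hfbm.ne_zero
  have hsplits : fb.Splits := IsAlgClosed.splits fb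
  set lst : List L := fb.roots.toList with hlst
  have hlen : lst.length = d := by
    rw [hlst, Multiset.length_toList, (splits_iff_card_roots).mp hsplits, hfbdeg]
  have hlen2 : 2 ≤ lst.length := by omega
  have hmemlst : ∀ ζ : L, ζ ∈ lst ↔ fb.eval ζ = 0 := by
    intro ζ
    rw [hlst, Multiset.mem_toList, mem_roots hfb0]
    exact Iff.rfl
  have hfbeval : ∀ ξ : L, fb.eval ξ = (lst.map (fun ζ => ξ - ζ)).prod := by
    intro ξ
    conv_lhs => rw [hsplits.eq_prod_roots_of_monic hfbm]
    rw [eval_multiset_prod, Multiset.map_map]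
    have h1 : (Multiset.map (eval ξ ∘ fun a => X - C a) fb.roots)
        = (↑(lst.map (fun ζ => ξ - ζ)) : Multiset L) := by
      conv_lhs => rw [← Multiset.coe_toList fb.roots]
      rw [Multiset.map_coe]
      congr 1
      apply List.map_congr_left
      intro x _
      simp [Function.comp]
    rw [h1, Multiset.prod_coe]
  have hevalK : ∀ x : K, ι₀ (f.eval x) = fb.eval (ι₀ x) := by
    intro x
    rw [hfb, Polynomial.eval_map, Polynomial.eval₂_at_apply]
  -- base root
  set ζ₁ : L := lst.getD 0 0 with hζ₁def
  have hζ₁mem : ζ₁ ∈ lst := by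
    rw [hζ₁def, List.getD_eq_getElem lst 0 (by omega)]
    exact List.getElem_mem _
  -- root indexing
  have hfinne : Nonempty (Fin d) := ⟨⟨0, hd0⟩⟩
  set gel : Fin d → L := fun k => lst.getD k 0 with hgel
  have hgelmem : ∀ k : Fin d, gel k ∈ lst := by
    intro k
    rw [hgel]
    simp only
    rw [List.getD_eq_getElem lst 0 (by omega : (k:ℕ) < lst.length)]
    exact List.getElem_mem _
  have hgelsurj : ∀ ζ ∈ lst, ∃ k : Fin d, gel k = ζ := by
    intro ζ hζ
    obtain ⟨idx, hidx, hidxeq⟩ := List.mem_iff_getElem.mp hζ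
    refine ⟨⟨idx, by omega⟩, ?_⟩
    rw [hgel]
    simp only
    rw [List.getD_eq_getElem lst 0 (by simpa using hidx)]
    exact hidxeq
  -- the place-dependent radii
  have hpne : (Finset.univ : Finset (Fin d × Fin d)).Nonempty := Finset.univ_nonempty
  set ρ : ι → ℝ := fun i =>
    Finset.univ.sup' hpne (fun p : Fin d × Fin d => w i (gel p.1 - gel p.2)) with hρdef
  have hρub : ∀ i, ∀ ζ ∈ lst, ∀ ζ' ∈ lst, w i (ζ - ζ') ≤ ρ i := by
    intro i ζ hζ ζ' hζ'
    obtain ⟨k, rfl⟩ := hgelsurj ζ hζ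
    obtain ⟨k', rfl⟩ := hgelsurj ζ' hζ'
    exact Finset.le_sup' (f := fun p : Fin d × Fin d => w i (gel p.1 - gel p.2))
      (Finset.mem_univ (k, k'))
  have hρat : ∀ i, ∃ ζ ∈ lst, ∃ ζ' ∈ lst, w i (ζ - ζ') = ρ i := by
    intro i
    obtain ⟨p, _, hp⟩ := Finset.exists_mem_eq_sup' hpne
      (fun p : Fin d × Fin d => w i (gel p.1 - gel p.2))
    exact ⟨gel p.1, hgelmem _, gel p.2, hgelmem _, hp.symm⟩
  have hρ0 : ∀ i, 0 ≤ ρ i := by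
    intro i
    obtain ⟨ζ, _, ζ', _, hp⟩ := hρat i
    rw [← hp]
    exact (w i).nonneg _
  have hρS : ∀ i ∈ S, 1 < ρ i := by
    intro i hi
    rw [hS] at hi
    obtain ⟨a, b, ha, hb, hab⟩ := hi
    have ha' : a ∈ lst := (hmemlst a).mpr ha
    have hb' : b ∈ lst := (hmemlst b).mpr hb
    exact lt_of_lt_of_le hab (hρub i a ha' b hb')
  have hρnS : ∀ i, i ∉ S → ρ i ≤ 1 := by
    intro i hi
    rw [hρdef]
    apply Finset.sup'_le
    intro p _
    by_contra hgt1
    push_neg at hgt1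
    apply hi
    rw [hS]
    exact ⟨gel p.1, gel p.2, (hmemlst _).mp (hgelmem _), (hmemlst _).mp (hgelmem _), hgt1⟩
  set Rh : ι → ℝ := fun i => max 1 (ρ i) with hRhdef
  have hRh1 : ∀ i, 1 ≤ Rh i := fun i => le_max_left _ _
  have hRhS : ∀ i ∈ S, Rh i = ρ i := by
    intro i hi
    rw [hRhdef]
    exact max_eq_right (le_of_lt (hρS i hi))
  have hRhnS : ∀ i, i ∉ S → Rh i = 1 := by
    intro i hi
    rw [hRhdef]
    exact max_eq_left (hρnS i hi)
  have hRhub : ∀ i, ∀ ζ ∈ lst, ∀ ζ' ∈ lst, w i (ζ - ζ') ≤ Rh i := by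
    intro i ζ hζ ζ' hζ'
    exact le_trans (hρub i ζ hζ ζ' hζ') (le_max_right _ _)
  -- the orbit over L
  set z : (K × K) → ℤ → L := fun P n => ι₀ (oseq φ φi P n) with hz
  have hzrec : ∀ P n, z P (n+1) - z P (n-1) = (lst.map (fun ζ => z P n - ζ)).prod := by
    intro P n
    rw [hz]
    simp only
    rw [← map_sub ι₀]
    rw [show oseq φ φi P (n+1) - oseq φ φi P (n-1) = f.eval (oseq φ φi P n) by
      rw [oseq_rec φ φi f hφ hφi P n]; ring]
    rw [hevalK, hfbeval]
  -- boundedness predicate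
  set Bnd : (K × K) → Prop := fun P => ∀ (i : ι) (n : ℤ), w i (z P n - ζ₁) ≤ Rh i with hBnddef
  -- coordinates of iterates
  have hcoord_fwd : ∀ (P : K × K) (N : ℕ) (i : ι),
      v i (φ^[N] P).1 = w i (z P ((N:ℤ) - 1)) ∧ v i (φ^[N] P).2 = w i (z P (N:ℤ)) := by
    intro P N i
    constructor
    · rw [fst_fwd φ φi f hφ hφi, hz]
      simp only
      rw [hweq]
    · rw [← oseq_nat φ φi P N, hz]
      simp only
      rw [hweq]
  have hcoord_bwd : ∀ (P : K × K) (N : ℕ) (i : ι),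
      v i (φi^[N] P).1 = w i (z P (-(N:ℤ) - 1)) ∧ v i (φi^[N] P).2 = w i (z P (-(N:ℤ))) := by
    intro P N i
    constructor
    · rw [fst_bwd φ φi f hφi, hz]
      simp only
      rw [hweq]
    · rw [← oseq_neg φ φi P N, hz]
      simp only
      rw [hweq]
  have hkeysq : ∀ (g : ℕ → ℝ) (lv C : ℝ), (∀ N, 0 ≤ g N) → (∀ N, g N ≤ C) →
      Tendsto (fun N : ℕ => ((d:ℝ)⁻¹)^N * g N) atTop (nhds lv) → lv = 0 := by
    intro g lv C hg0 hgC hten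
    have hdinv : ((d:ℝ)⁻¹) < 1 := inv_lt_one_of_one_lt₀ hdR1
    have hup : Tendsto (fun N : ℕ => ((d:ℝ)⁻¹)^N * C) atTop (nhds 0) := by
      have h2 := (tendsto_pow_atTop_nhds_zero_of_lt_one (by positivity) hdinv).mul_const C
      simpa using h2
    have hsq : Tendsto (fun N : ℕ => ((d:ℝ)⁻¹)^N * g N) atTop (nhds 0) := by
      refine tendsto_of_tendsto_of_tendsto_of_le_of_le tendsto_const_nhds hup ?_ ?_
      · intro N
        exact mul_nonneg (by positivity) (hg0 N)
      · intro N
        exact mul_le_mul_of_nonneg_left (hgC N) (by positivity)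
    exact tendsto_nhds_unique hten hsq
  -- BLOCK A
  have hsqueeze : ∀ (P : K × K) (i : ι),
      (∀ n : ℤ, w i (z P n - ζ₁) ≤ Rh i) → lp i P = 0 ∧ lm i P = 0 := by
    intro P i hb
    have hM0 : ∀ n : ℤ, w i (z P n) ≤ max (Rh i) (w i ζ₁) := by
      intro n
      rw [show z P n = (z P n - ζ₁) + ζ₁ by ring]
      calc w i ((z P n - ζ₁) + ζ₁) ≤ max (w i (z P n - ζ₁)) (w i ζ₁) := hwna i _ _
        _ ≤ max (Rh i) (w i ζ₁) := max_le_max (hb n) le_rfl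
    set M : ℝ := max (max (Rh i) (w i ζ₁)) 1 with hMdef
    have hM1 : (1:ℝ) ≤ M := le_max_right _ _
    have hMb : ∀ n : ℤ, w i (z P n) ≤ M := fun n => le_trans (hM0 n) (le_max_left _ _)
    have hdinv : ((d:ℝ)⁻¹) < 1 := inv_lt_one_of_one_lt₀ hdR1
    have hdinv0 : (0:ℝ) ≤ (d:ℝ)⁻¹ := by positivity
    have key : ∀ (g : ℕ → ℝ) (lv : ℝ), (∀ N, 0 ≤ g N) → (∀ N, g N ≤ Real.log M) →
        Tendsto (fun N : ℕ => ((d:ℝ)⁻¹)^N * g N) atTop (nhds lv) → lv = 0 := by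
      intro g lv hg0 hgM hten
      have hup : Tendsto (fun N : ℕ => ((d:ℝ)⁻¹)^N * Real.log M) atTop (nhds 0) := by
        have h2 := (tendsto_pow_atTop_nhds_zero_of_lt_one hdinv0 hdinv).mul_const (Real.log M)
        simpa using h2
      have hsq : Tendsto (fun N : ℕ => ((d:ℝ)⁻¹)^N * g N) atTop (nhds 0) := by
        refine tendsto_of_tendsto_of_tendsto_of_le_of_le tendsto_const_nhds hup ?_ ?_
        · intro N
          exact mul_nonneg (by positivity) (hg0 N)
        · intro N
          exact mul_le_mul_of_nonneg_left (hgM N) (by positivity)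
      exact tendsto_nhds_unique hten hsq
    constructor
    · refine key _ _ (fun N => Real.log_nonneg (le_max_right _ _)) (fun N => ?_) (hlp i P)
      apply Real.log_le_log (by positivity)
      refine max_le (max_le ?_ ?_) hM1
      · rw [(hcoord_fwd P N i).1]; exact hMb _
      · rw [(hcoord_fwd P N i).2]; exact hMb _
    · refine key _ _ (fun N => Real.log_nonneg (le_max_right _ _)) (fun N => ?_) (hlm i P)
      apply Real.log_le_log (by positivity)
      refine max_le (max_le ?_ ?_) hM1
      · rw [(hcoord_bwd P N i).1]; exact hMb _
      · rw [(hcoord_bwd P N i).2]; exact hMb _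
  -- BLOCK B : vanishing local heights imply bounded orbit (escape-rate argument)
  have hescape : ∀ (P : K × K) (i : ι),
      lp i P = 0 → lm i P = 0 → ∀ n : ℤ, w i (z P n - ζ₁) ≤ Rh i := by
    intro P i hlp0 hlm0
    by_contra hc
    push_neg at hc
    obtain ⟨m, hm⟩ := hc
    set y : ℤ → ℝ := fun n => w i (z P n - ζ₁) with hy
    have hstep : ∀ n : ℤ, Rh i < y n → (y n)^d ≤ max (y (n+1)) (y (n-1)) := by
      intro n hn
      have hfac : ∀ ζ ∈ lst, w i (z P n - ζ) = y n := by
        intro ζ hζ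
        rw [show z P n - ζ = (z P n - ζ₁) + (ζ₁ - ζ) by ring]
        apply na_add_eq_left (w i) (hwna i)
        calc w i (ζ₁ - ζ) ≤ Rh i := hRhub i ζ₁ hζ₁mem ζ hζ
          _ < y n := hn
      have hprodval : (lst.map (fun ζ => w i (z P n - ζ))).prod = (y n)^d := by
        rw [list_prod_eq_pow _ (y n) ?_]
        · rw [List.length_map, hlen]
        · intro x hx
          obtain ⟨ζ, hζ, rfl⟩ := List.mem_map.mp hx
          exact hfac ζ hζ
      have h2 : w i (z P (n+1) - z P (n-1)) = (y n)^d := by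
        rw [hzrec P n, map_list_prod (w i), List.map_map]
        exact hprodval
      rw [← h2]
      calc w i (z P (n+1) - z P (n-1))
          = w i ((z P (n+1) - ζ₁) - (z P (n-1) - ζ₁)) := by ring_nf
        _ ≤ max (y (n+1)) (y (n-1)) := na_sub_le (w i) (hwna i) _ _
    have hcommon : ∀ (B : ℝ), 1 < B → ∃ B' : ℝ, (1 < B' ∧ w i ζ₁ < B') ∧
        ∃ k₀ : ℕ, ∀ k : ℕ, B' ^ (d ^ k) = B ^ (d ^ (k₀ + k)) := by
      intro B hB
      obtain ⟨k₀, hk₀⟩ := pow_unbounded_of_one_lt (max 1 (w i ζ₁)) hB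
      refine ⟨B ^ (d ^ k₀), ⟨one_lt_pow₀ hB (by positivity), ?_⟩, k₀, fun k => ?_⟩
      · calc w i ζ₁ ≤ max 1 (w i ζ₁) := le_max_right _ _
          _ < B ^ k₀ := hk₀
          _ ≤ B ^ (d ^ k₀) := pow_le_pow_right₀ (le_of_lt hB)
              (le_of_lt (Nat.lt_pow_self (by omega : 1 < d) : k₀ < d ^ k₀))
      · rw [← pow_mul, ← pow_add]
    rcases grow_main y (Rh i) (hRh1 i) d hd2 hstep m hm
      with ⟨B, hB, m₂, hgrow⟩ | ⟨B, hB, m₂, hgrow⟩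
    · -- forward escape: lp i P > 0
      obtain ⟨B', ⟨hB'1, hB'ζ⟩, k₀, hB'eq⟩ := hcommon B hB
      have hgrow' : ∀ k : ℕ, B' ^ (d ^ k) ≤ y (((m₂ + k₀ + k : ℕ) : ℤ)) := by
        intro k
        rw [hB'eq k]
        have h3 := hgrow (k₀ + k)
        convert h3 using 2
        push_cast
        ring
      have hpos : 0 < lp i P := by
        apply lp_pos_of_growth d hd2 B' hB'1 (m₂ + k₀) (lp i P)
          (fun N => Real.log (max (max (v i (φ^[N] P).1) (v i (φ^[N] P).2)) 1)) ?_ (hlp i P)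
        intro k
        have h4 := hgrow' k
        have hwz : B' ^ (d ^ k) ≤ w i (z P ((m₂ + k₀ + k : ℕ) : ℤ)) := by
          have hlt : w i ζ₁ < w i (z P ((m₂ + k₀ + k : ℕ) : ℤ) - ζ₁) := by
            calc w i ζ₁ < B' := hB'ζ
              _ ≤ B' ^ (d ^ k) := le_self_pow₀ (le_of_lt hB'1) (by positivity)
              _ ≤ _ := h4
          have hyval : w i (z P ((m₂ + k₀ + k : ℕ) : ℤ)) = y ((m₂ + k₀ + k : ℕ) : ℤ) := by
            rw [hy]
            simp only
            calc w i (z P ((m₂ + k₀ + k : ℕ) : ℤ))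
                = w i ((z P ((m₂ + k₀ + k : ℕ) : ℤ) - ζ₁) + ζ₁) := by ring_nf
              _ = w i (z P ((m₂ + k₀ + k : ℕ) : ℤ) - ζ₁) :=
                  na_add_eq_left (w i) (hwna i) hlt
          rw [hyval]
          exact h4
        calc ((d ^ k : ℕ) : ℝ) * Real.log B' = Real.log (B' ^ (d ^ k)) := by
              rw [Real.log_pow]
          _ ≤ Real.log (max (max (v i (φ^[m₂ + k₀ + k] P).1)
              (v i (φ^[m₂ + k₀ + k] P).2)) 1) := by
              apply Real.log_le_log (by positivity)
              calc B' ^ (d ^ k) ≤ w i (z P ((m₂ + k₀ + k : ℕ) : ℤ)) := hwz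
                _ = v i (φ^[m₂ + k₀ + k] P).2 := ((hcoord_fwd P _ i).2).symm
                _ ≤ max (max (v i (φ^[m₂ + k₀ + k] P).1)
                    (v i (φ^[m₂ + k₀ + k] P).2)) 1 :=
                  le_max_of_le_left (le_max_right _ _)
      linarith
    · -- backward escape: lm i P > 0
      obtain ⟨B', ⟨hB'1, hB'ζ⟩, k₀, hB'eq⟩ := hcommon B hB
      have hgrow' : ∀ k : ℕ, B' ^ (d ^ k) ≤ y (-((m₂ + k₀ + k : ℕ) : ℤ)) := by
        intro k
        rw [hB'eq k]
        have h3 := hgrow (k₀ + k)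
        convert h3 using 2
        push_cast
        ring
      have hpos : 0 < lm i P := by
        apply lp_pos_of_growth d hd2 B' hB'1 (m₂ + k₀) (lm i P)
          (fun N => Real.log (max (max (v i (φi^[N] P).1) (v i (φi^[N] P).2)) 1)) ?_ (hlm i P)
        intro k
        have h4 := hgrow' k
        have hwz : B' ^ (d ^ k) ≤ w i (z P (-((m₂ + k₀ + k : ℕ) : ℤ))) := by
          have hlt : w i ζ₁ < w i (z P (-((m₂ + k₀ + k : ℕ) : ℤ)) - ζ₁) := by
            calc w i ζ₁ < B' := hB'ζ
              _ ≤ B' ^ (d ^ k) := le_self_pow₀ (le_of_lt hB'1) (by positivity)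
              _ ≤ _ := h4
          have hyval : w i (z P (-((m₂ + k₀ + k : ℕ) : ℤ)))
              = y (-((m₂ + k₀ + k : ℕ) : ℤ)) := by
            rw [hy]
            simp only
            calc w i (z P (-((m₂ + k₀ + k : ℕ) : ℤ)))
                = w i ((z P (-((m₂ + k₀ + k : ℕ) : ℤ)) - ζ₁) + ζ₁) := by ring_nf
              _ = w i (z P (-((m₂ + k₀ + k : ℕ) : ℤ)) - ζ₁) :=
                  na_add_eq_left (w i) (hwna i) hlt
          rw [hyval]
          exact h4
        calc ((d ^ k : ℕ) : ℝ) * Real.log B' = Real.log (B' ^ (d ^ k)) := by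
              rw [Real.log_pow]
          _ ≤ Real.log (max (max (v i (φi^[m₂ + k₀ + k] P).1)
              (v i (φi^[m₂ + k₀ + k] P).2)) 1) := by
              apply Real.log_le_log (by positivity)
              calc B' ^ (d ^ k) ≤ w i (z P (-((m₂ + k₀ + k : ℕ) : ℤ))) := hwz
                _ = v i (φi^[m₂ + k₀ + k] P).2 := ((hcoord_bwd P _ i).2).symm
                _ ≤ max (max (v i (φi^[m₂ + k₀ + k] P).1)
                    (v i (φi^[m₂ + k₀ + k] P).2)) 1 :=
                  le_max_of_le_left (le_max_right _ _)
      linarith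
  -- nonnegativity and vanishing of the local terms
  have hlpnn : ∀ (i : ι) (P : K × K), 0 ≤ lp i P ∧ 0 ≤ lm i P := by
    intro i P
    constructor
    · refine ge_of_tendsto (hlp i P) (Filter.Eventually.of_forall fun N => ?_)
      exact mul_nonneg (by positivity) (Real.log_nonneg (le_max_right _ _))
    · refine ge_of_tendsto (hlm i P) (Filter.Eventually.of_forall fun N => ?_)
      exact mul_nonneg (by positivity) (Real.log_nonneg (le_max_right _ _))
  have hterm0 : ∀ P : K × K, hgt P = 0 → ∀ i, lp i P = 0 ∧ lm i P = 0 := by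
    intro P h0 i
    have hnn : ∀ j, 0 ≤ lp j P + lm j P := by
      intro j
      have := hlpnn j P
      linarith [this.1, this.2]
    have hzero : ∀ j, lp j P + lm j P = 0 := by
      intro j
      by_cases hj : j ∈ (hfin P).toFinset
      · have hsum : ∑ k ∈ (hfin P).toFinset, (lp k P + lm k P) = 0 := by
          rw [← finsum_eq_sum _ (hfin P), ← hhgt P, h0]
        exact (Finset.sum_eq_zero_iff_of_nonneg (fun k _ => hnn k)).mp hsum j hj
      · rw [Set.Finite.mem_toFinset] at hj
        by_contra hne
        exact hj hne
    have := hlpnn i P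
    constructor
    · linarith [hzero i, this.1, this.2]
    · linarith [hzero i, this.1, this.2]
  -- characterization
  have hchar : ∀ P : K × K, hgt P = 0 ↔ Bnd P := by
    intro P
    constructor
    · intro h0 i n
      exact hescape P i (hterm0 P h0 i).1 (hterm0 P h0 i).2 n
    · intro hb
      rw [hhgt]
      have : ∀ i, lp i P + lm i P = 0 := by
        intro i
        obtain ⟨h1, h2⟩ := hsqueeze P i (fun n => hb i n)
        rw [h1, h2, add_zero]
      calc ∑ᶠ (i : ι), (lp i P + lm i P) = ∑ᶠ (i : ι), (0:ℝ) := by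
            exact finsum_congr this
        _ = 0 := finsum_zero
  -- BLOCK C : classification data
  set center : Gam d → L := fun γ => Sum.elim (fun k => gel k)
    (fun t : Fin d × Bool × Fin d =>
      (Gpoly lst (gel t.1) t.2.1).roots.toList.getD (t.2.2 : ℕ) 0) γ with hcenter
  have hex : ∀ (P : K × K), Bnd P → ∀ i ∈ S, ∀ n : ℤ,
      ∃ γ : Gam d, w i (z P n - center γ) < 1 := by
    intro P hBP i hiS n
    have hρi : 1 < ρ i := hρS i hiS
    have hRρ : Rh i = ρ i := hRhS i hiS
    have hbnd1 : ∀ (nn : ℤ), ∀ ζ ∈ lst, w i (z P nn - ζ) ≤ ρ i := by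
      intro nn ζ hζ
      calc w i (z P nn - ζ) = w i ((z P nn - ζ₁) - (ζ - ζ₁)) := by ring_nf
        _ ≤ max (w i (z P nn - ζ₁)) (w i (ζ - ζ₁)) := na_sub_le (w i) (hwna i) _ _
        _ ≤ ρ i := max_le (hRρ ▸ hBP i nn) (hρub i ζ hζ ζ₁ hζ₁mem)
    have hbnd2 : ∀ (nn mm : ℤ), w i (z P nn - z P mm) ≤ ρ i := by
      intro nn mm
      calc w i (z P nn - z P mm) = w i ((z P nn - ζ₁) - (z P mm - ζ₁)) := by ring_nf
        _ ≤ max (w i (z P nn - ζ₁)) (w i (z P mm - ζ₁)) := na_sub_le (w i) (hwna i) _ _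
        _ ≤ ρ i := max_le (hRρ ▸ hBP i nn) (hRρ ▸ hBP i mm)
    rcases CLS (w i) (hwna i) lst hlen2 (ρ i) hρi (hρat i) (z P) (hzrec P) hbnd1 hbnd2 n with
      ⟨ζ, hζ, hζlt⟩ | ⟨ζs, hζs, sb, β, hβ, hβlt⟩
    · obtain ⟨k, hk⟩ := hgelsurj ζ hζ
      refine ⟨Sum.inl k, ?_⟩
      rw [hcenter]
      simp only [Sum.elim_inl]
      rw [hk]
      exact hζlt
    · obtain ⟨k, hk⟩ := hgelsurj ζs hζs
      have hβl : β ∈ (Gpoly lst ζs sb).roots.toList := Multiset.mem_toList.mpr hβ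
      obtain ⟨jn, hjn, hjeq⟩ := List.mem_iff_getElem.mp hβl
      have hjlt : jn < d := by
        have h5 : (Gpoly lst ζs sb).roots.toList.length ≤ d - 1 := by
          rw [Multiset.length_toList]
          calc Multiset.card (Gpoly lst ζs sb).roots ≤ (Gpoly lst ζs sb).natDegree :=
                Polynomial.card_roots' _
            _ = (lst.erase ζs).length := Gpoly_natDegree lst ζs sb
            _ = d - 1 := by rw [List.length_erase_of_mem hζs, hlen]
        omega
      refine ⟨Sum.inr (k, sb, ⟨jn, hjlt⟩), ?_⟩
      rw [hcenter]
      simp only [Sum.elim_inr]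
      rw [hk]
      rw [List.getD_eq_getElem _ _ hjn, hjeq]
      exact hβlt
  -- BLOCK D : injectivity of the data map and counting
  set Zset : Set (K × K) := {P : K × K | hgt P = 0} with hZset
  have hZBnd : ∀ P : K × K, P ∈ Zset → Bnd P := by
    intro P hP
    exact (hchar P).mp hP
  have hSne : S.Nonempty := Set.nonempty_of_ncard_ne_zero (by omega)
  obtain ⟨i₀, hi₀⟩ := hSne
  -- the small-difference lemma
  have hdiffsmall : ∀ (x y : K), (∀ i, v i (x - y) ≤ 1) → (∃ i ∈ S, v i (x - y) < 1) →
      x = y := by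
    intro x y hle hlt
    by_contra hne
    have hδ : x - y ≠ 0 := sub_ne_zero.mpr hne
    obtain ⟨hsupp, hone⟩ := hprod (x - y) hδ
    obtain ⟨i₁, hi₁S, hi₁lt⟩ := hlt
    set Fs : Finset ι := hsupp.toFinset ∪ {i₁} with hFs
    have hsub : Function.mulSupport (fun i => v i (x - y)) ⊆ ↑Fs := by
      intro j hj
      rw [hFs]
      simp only [Finset.coe_union, Set.mem_union, Finset.coe_singleton, Set.mem_singleton_iff]
      left
      exact (Set.Finite.mem_toFinset hsupp).mpr hj
    have heq : ∏ᶠ i, v i (x - y) = ∏ j ∈ Fs, v j (x - y) :=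
      finprod_eq_prod_of_mulSupport_subset _ hsub
    have hi₁Fs : i₁ ∈ Fs := Finset.mem_union_right _ (Finset.mem_singleton_self i₁)
    have hlt1 : ∏ j ∈ Fs, v j (x - y) < 1 := by
      rw [← Finset.mul_prod_erase Fs _ hi₁Fs]
      have hrest : ∏ j ∈ Fs.erase i₁, v j (x - y) ≤ 1 :=
        Finset.prod_le_one (fun j _ => (v j).nonneg _) (fun j _ => hle j)
      have hv0 : 0 ≤ v i₁ (x - y) := (v i₁).nonneg _
      calc v i₁ (x - y) * ∏ j ∈ Fs.erase i₁, v j (x - y) ≤ v i₁ (x - y) * 1 :=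
            mul_le_mul_of_nonneg_left hrest hv0
        _ < 1 := by rw [mul_one]; exact hi₁lt
    rw [heq] at hone
    linarith
  -- data map
  have hcard : Zset.ncard ≤ (3 * d ^ 6) ^ s ∧ Zset.Finite := by
    have hTmem : ∀ i : {j // j ∈ hSfin.toFinset}, (i : ι) ∈ S :=
      fun i => (Set.Finite.mem_toFinset hSfin).mp i.2
    have hexx : ∀ (P : ↥Zset) (i : {j // j ∈ hSfin.toFinset}) (n : ℤ),
        ∃ γ : Gam d, w i.1 (z P.1 n - center γ) < 1 := fun P i n =>
      hex P.1 (hZBnd P.1 P.2) i.1 (hTmem i) n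
    set F : ↥Zset → ({j // j ∈ hSfin.toFinset} → Gam d × Gam d) := fun P i =>
      ((hexx P i (-1)).choose, (hexx P i 0).choose) with hF
    have hFinj : Function.Injective F := by
      intro P Q hPQ
      have hclass : ∀ (j : ι), j ∈ S → ∀ n : ℤ, (n = -1 ∨ n = 0) →
          w j (z P.1 n - z Q.1 n) < 1 := by
        intro j hj n hn
        have hj' : j ∈ hSfin.toFinset := (Set.Finite.mem_toFinset hSfin).mpr hj
        set jj : {j // j ∈ hSfin.toFinset} := ⟨j, hj'⟩ with hjj
        have hfpq := congrFun hPQ jj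
        rcases hn with rfl | rfl
        · have h1 := (hexx P jj (-1)).choose_spec
          have h2 := (hexx Q jj (-1)).choose_spec
          have heqγ : (hexx P jj (-1)).choose = (hexx Q jj (-1)).choose := by
            have := congrArg Prod.fst hfpq
            simpa [hF] using this
          rw [heqγ] at h1
          have h3 : z P.1 (-1) - z Q.1 (-1)
              = (z P.1 (-1) - center (hexx Q jj (-1)).choose)
                - (z Q.1 (-1) - center (hexx Q jj (-1)).choose) := by ring
          rw [h3]
          exact lt_of_le_of_lt (na_sub_le (w j) (hwna j) _ _) (max_lt h1 h2)
        · have h1 := (hexx P jj 0).choose_spec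
          have h2 := (hexx Q jj 0).choose_spec
          have heqγ : (hexx P jj 0).choose = (hexx Q jj 0).choose := by
            have := congrArg Prod.snd hfpq
            simpa [hF] using this
          rw [heqγ] at h1
          have h3 : z P.1 0 - z Q.1 0
              = (z P.1 0 - center (hexx Q jj 0).choose)
                - (z Q.1 0 - center (hexx Q jj 0).choose) := by ring
          rw [h3]
          exact lt_of_le_of_lt (na_sub_le (w j) (hwna j) _ _) (max_lt h1 h2)
      have hkey : ∀ n : ℤ, (n = -1 ∨ n = 0) → oseq φ φi P.1 n = oseq φ φi Q.1 n := by
        intro n hn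
        have hvw : ∀ j : ι, v j (oseq φ φi P.1 n - oseq φ φi Q.1 n)
            = w j (z P.1 n - z Q.1 n) := by
          intro j
          rw [← hweq j, map_sub]
        apply hdiffsmall
        · intro j
          rw [hvw j]
          by_cases hj : j ∈ S
          · exact le_of_lt (hclass j hj n hn)
          · calc w j (z P.1 n - z Q.1 n)
                = w j ((z P.1 n - ζ₁) - (z Q.1 n - ζ₁)) := by ring_nf
              _ ≤ max (w j (z P.1 n - ζ₁)) (w j (z Q.1 n - ζ₁)) :=
                  na_sub_le (w j) (hwna j) _ _
              _ ≤ 1 := by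
                  rw [← hRhnS j hj]
                  exact max_le (hZBnd P.1 P.2 j n) (hZBnd Q.1 Q.2 j n)
        · exact ⟨i₀, hi₀, by rw [hvw i₀]; exact hclass i₀ hi₀ n hn⟩
      have h1 : P.1.1 = Q.1.1 := by
        have := hkey (-1) (Or.inl rfl)
        rwa [oseq_m1 φ φi f hφi, oseq_m1 φ φi f hφi] at this
      have h2 : P.1.2 = Q.1.2 := by
        have := hkey 0 (Or.inr rfl)
        rwa [oseq_zero, oseq_zero] at this
      exact Subtype.ext (Prod.ext h1 h2)
    have hZfinite : Zset.Finite := by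
      rw [← Set.finite_coe_iff]
      exact Finite.of_injective F hFinj
    refine ⟨?_, hZfinite⟩
    rw [← Nat.card_coe_set_eq]
    calc Nat.card ↥Zset ≤ Nat.card ({j // j ∈ hSfin.toFinset} → Gam d × Gam d) :=
          Nat.card_le_card_of_injective F hFinj
      _ = (Fintype.card (Gam d × Gam d)) ^ s := by
          rw [Nat.card_eq_fintype_card, Fintype.card_fun]
          congr 1
          rw [Fintype.card_coe, ← hs, Set.ncard_eq_toFinset_card S hSfin]
      _ ≤ (3 * d ^ 6) ^ s := by
          apply Nat.pow_le_pow_left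
          rw [Fintype.card_prod, Gam_card]
          have e0 : d ≤ d * d := Nat.le_mul_of_pos_left d hd0
          have e1 : d + d * (2 * d) ≤ 3 * (d * d) := by
            calc d + d * (2 * d) = d + 2 * (d * d) := by ring
              _ ≤ d * d + 2 * (d * d) := by omega
              _ = 3 * (d * d) := by ring
          have h9 : 9 ≤ d * d := Nat.mul_le_mul hd hd
          calc (d + d * (2 * d)) * (d + d * (2 * d)) ≤ (3 * (d * d)) * (3 * (d * d)) :=
                Nat.mul_le_mul e1 e1
            _ = 9 * d ^ 4 := by ring
            _ ≤ (d * d) * d ^ 4 := Nat.mul_le_mul_right _ (by omega)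
            _ = d ^ 6 := by ring
            _ ≤ 3 * d ^ 6 := Nat.le_mul_of_pos_left _ (by omega)
  -- BLOCK E : periodic points
  have hper0 : ∀ (P : K × K) (n : ℕ), 1 ≤ n → φ^[n] P = P → hgt P = 0 := by
    intro P n hn1 hper
    have hloc : ∀ i, lp i P = 0 ∧ lm i P = 0 := by
      intro i
      have hq : ∀ (ψ : K × K → K × K), ψ^[n] P = P → ∀ N : ℕ, ψ^[N] P = ψ^[N % n] P := by
        intro ψ hψ N
        have hqr : ∀ q r : ℕ, ψ^[n * q + r] P = ψ^[r] P := by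
          intro q r
          induction q with
          | zero => simp
          | succ q ih =>
            rw [show n * (q+1) + r = (n * q + r) + n by ring,
              Function.iterate_add_apply, hψ, ih]
        calc ψ^[N] P = ψ^[n * (N / n) + N % n] P := by rw [Nat.div_add_mod]
          _ = ψ^[N % n] P := hqr _ _
      have hiper : φi^[n] P = P := by
        conv_lhs => rw [← hper]
        exact iter_inv φ φi f hφ hφi n P
      have hrange : (Finset.range n).Nonempty := ⟨0, Finset.mem_range.mpr (by omega)⟩
      constructor
      · set g : ℕ → ℝ := fun N =>
          Real.log (max (max (v i (φ^[N] P).1) (v i (φ^[N] P).2)) 1) with hgdef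
        refine hkeysq g _ ((Finset.range n).sup' hrange g)
          (fun N => Real.log_nonneg (le_max_right _ _)) (fun N => ?_) (hlp i P)
        have h1 : g N = g (N % n) := by
          rw [hgdef]
          simp only
          rw [hq φ hper N]
        rw [h1]
        exact Finset.le_sup' g (Finset.mem_range.mpr (Nat.mod_lt N (by omega)))
      · set g : ℕ → ℝ := fun N =>
          Real.log (max (max (v i (φi^[N] P).1) (v i (φi^[N] P).2)) 1) with hgdef
        refine hkeysq g _ ((Finset.range n).sup' hrange g)
          (fun N => Real.log_nonneg (le_max_right _ _)) (fun N => ?_) (hlm i P)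
        have h1 : g N = g (N % n) := by
          rw [hgdef]
          simp only
          rw [hq φi hiper N]
        rw [h1]
        exact Finset.le_sup' g (Finset.mem_range.mpr (Nat.mod_lt N (by omega)))
    rw [hhgt]
    calc ∑ᶠ (i : ι), (lp i P + lm i P) = ∑ᶠ (_ : ι), (0:ℝ) :=
          finsum_congr (fun i => by rw [(hloc i).1, (hloc i).2, add_zero])
      _ = 0 := finsum_zero
  have h0per : ∀ P : K × K, hgt P = 0 → ∃ n : ℕ, 1 ≤ n ∧ φ^[n] P = P := by
    intro P hP
    have hφmem : ∀ Q : K × K, hgt Q = 0 → hgt (φ Q) = 0 := by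
      intro Q hQ
      rw [hchar Q] at hQ
      rw [hchar (φ Q)]
      intro i n
      have h1 : z (φ Q) n = z Q (n+1) := by
        rw [hz]
        simp only
        rw [oseq_shift φ φi f hφ hφi]
      rw [h1]
      exact hQ i (n+1)
    have hφinj : Function.Injective φ := by
      intro a b hab
      have h1 := congrArg φi hab
      rwa [hinv2 φ φi f hφ hφi, hinv2 φ φi f hφ hφi] at h1
    set g : ↥Zset → ↥Zset := fun Q => ⟨φ Q.1, hφmem Q.1 Q.2⟩ with hgdef
    have hginj : Function.Injective g := by
      intro a b hab
      apply Subtype.ext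
      apply hφinj
      exact congrArg Subtype.val hab
    haveI : Finite ↥Zset := Set.finite_coe_iff.mpr hcard.2
    have hproj : ∀ (k : ℕ) (x : ↥Zset), (g^[k] x).1 = φ^[k] x.1 := by
      intro k
      induction k with
      | zero => intro x; simp
      | succ k ih =>
        intro x
        rw [Function.iterate_succ_apply', Function.iterate_succ_apply']
        rw [hgdef]
        simp only
        rw [ih]
    set x : ↥Zset := (⟨P, hP⟩ : ↥Zset) with hx
    have hgen : ∀ a b : ℕ, a < b → g^[a] x = g^[b] x → ∃ n : ℕ, 1 ≤ n ∧ φ^[n] P = P := by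
      intro a b hab heq
      have h1 : g^[a] (g^[b-a] x) = g^[a] x := by
        rw [← Function.iterate_add_apply, show a + (b - a) = b by omega]
        exact heq.symm
      have h2 : g^[b-a] x = x := (hginj.iterate a) h1
      refine ⟨b - a, by omega, ?_⟩
      have h3 := congrArg Subtype.val h2
      rw [hproj] at h3
      exact h3
    obtain ⟨a, b, hab, heq⟩ := Finite.exists_ne_map_eq_of_infinite (fun k : ℕ => g^[k] x)
    rcases lt_trichotomy a b with h | h | h
    · exact hgen a b h heq
    · exact absurd h hab
    · exact hgen b a h heq.symm
  -- conclusion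
  refine ⟨hcard.1, fun P => ⟨h0per P, fun ⟨n, hn1, hn⟩ => hper0 P n hn1 hn⟩, ?_⟩
  have hsub : {P : K × K | ∃ n : ℕ, 1 ≤ n ∧ φ^[n] P = P} ⊆ Zset := by
    intro P hP
    obtain ⟨n, hn1, hn⟩ := hP
    exact hper0 P n hn1 hn
  exact le_trans (Set.ncard_le_ncard hsub hcard.2) hcard.1
end

section
/- Let φ₁(x,y) = (ay, x + f(y)) be a Hénon map over a field K with f monic of degree d ≥ 2 and a ∈ K*. Then a Hénon map φ₂(x,y) = (ay, x + g(y)) is affine-conjugate to φ₁ (i.e., φ₂ = ψ⁻¹ ∘ φ₁ ∘ ψ for an invertible affine map ψ over K̄) with g monic of degree d if and only if g(y) = δ⁻¹ f(δy + t) + δ⁻¹(a−1)t for some δ, t ∈ K̄ with δ^{d−1} = 1. In particular, when a = 1, for every t ∈ K̄ the map (x,y) ↦ (y, x + f(y + t)) is affine-conjugate to φ₁. -/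
open Polynomial

/-- Lemma 2.2: the Hénon map `φ₂(x,y) = (ay, x+g(y))` is
affine-conjugate (over the algebraic closure) to `φ₁(x,y) = (ay, x+f(y))` if and
only if `g(y) = δ⁻¹ f(δy+t) + δ⁻¹(a−1)t` for some `δ, t` with `δ^{d−1} = 1`.
In particular, when `a = 1`, every map `(x,y) ↦ (y, x+f(y+t))` is affine-conjugate
to `φ₁`. -/
theorem stmt17 {K L : Type*} [Field K] [Field L] [Algebra K L] [IsAlgClosure K L]
    (d : ℕ) (hd : 2 ≤ d)
    (f g : K[X]) (hf : f.Monic) (hfd : f.natDegree = d)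
    (hg : g.Monic) (hgd : g.natDegree = d)
    (a : K) (ha : a ≠ 0)
    (fL gL : L[X]) (hfL : fL = f.map (algebraMap K L)) (hgL : gL = g.map (algebraMap K L))
    (aL : L) (haL : aL = algebraMap K L a)
    (φ₁ φ₂ : L × L → L × L)
    (hφ₁ : ∀ P, φ₁ P = (aL * P.2, P.1 + fL.eval P.2))
    (hφ₂ : ∀ P, φ₂ P = (aL * P.2, P.1 + gL.eval P.2))
    (Conj : (L × L → L × L) → (L × L → L × L) → Prop)
    (hConj : ∀ u₁ u₂, Conj u₁ u₂ ↔ ∃ α β γ δ s t : L, α * δ - β * γ ≠ 0 ∧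
      ∀ P : L × L,
        (α * (u₂ P).1 + β * (u₂ P).2 + s, γ * (u₂ P).1 + δ * (u₂ P).2 + t) =
          u₁ (α * P.1 + β * P.2 + s, γ * P.1 + δ * P.2 + t)) :
    (Conj φ₁ φ₂ ↔ ∃ δ t : L, δ ^ (d - 1) = 1 ∧
      ∀ z : L, gL.eval z = δ⁻¹ * fL.eval (δ * z + t) + δ⁻¹ * (aL - 1) * t) ∧
    (a = 1 → ∀ t : L, Conj φ₁ (fun P => (P.2, P.1 + fL.eval (P.2 + t)))) := by
  haveI : IsAlgClosed L := IsAlgClosure.isAlgClosed K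
  haveI : Infinite L := IsAlgClosed.instInfinite
  have haL0 : aL ≠ 0 := by
    rw [haL]
    simpa using (map_ne_zero_iff _ (algebraMap K L).injective).mpr ha
  have hfLm : fL.Monic := hfL ▸ hf.map _
  have hfLd : fL.natDegree = d := by rw [hfL, natDegree_map]; exact hfd
  have hgLm : gL.Monic := hgL ▸ hg.map _
  have hgLd : gL.natDegree = d := by rw [hgL, natDegree_map]; exact hgd
  constructor
  · constructor
    · intro h
      obtain ⟨α, β, γ, δ, s, t, hdet, heq⟩ := (hConj _ _).mp h
      simp only [hφ₁, hφ₂] at heq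
      have e1 : ∀ x y : L, α * (aL * y) + β * (x + gL.eval y) + s
          = aL * (γ * x + δ * y + t) := fun x y => congrArg Prod.fst (heq (x, y))
      have e2 : ∀ x y : L, γ * (aL * y) + δ * (x + gL.eval y) + t
          = (α * x + β * y + s) + fL.eval (γ * x + δ * y + t) :=
        fun x y => congrArg Prod.snd (heq (x, y))
      have hβγ : β = aL * γ := by linear_combination e1 1 0 - e1 0 0
      have hβ0 : β = 0 := by
        by_contra hb
        have hglin : gL = C (β⁻¹ * (aL * δ - α * aL)) * X + C (β⁻¹ * (aL * t - s)) := by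
          apply Polynomial.funext
          intro y
          have h1 := e1 0 y
          simp only [eval_add, eval_mul, eval_C, eval_X]
          field_simp
          linear_combination h1
        have hle : gL.natDegree ≤ 1 := hglin ▸ natDegree_linear_le
        rw [hgLd] at hle
        omega
      have hγ0 : γ = 0 := by
        rcases mul_eq_zero.mp (hβγ.symm.trans hβ0) with h' | h'
        · exact absurd h' haL0
        · exact h'
      have hs : s = aL * t := by
        linear_combination e1 0 0 - gL.eval 0 * hβ0
      have hαδ : α = δ := by
        refine mul_left_cancel₀ haL0 ?_
        linear_combination e1 0 1 - e1 0 0 - (gL.eval 1 - gL.eval 0) * hβ0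
      have hδ0 : δ ≠ 0 := by
        intro h'
        exact hdet (by rw [hαδ, hβ0, hγ0, h']; ring)
      have heval : ∀ z : L, gL.eval z = δ⁻¹ * fL.eval (δ * z + t) + δ⁻¹ * (aL - 1) * t := by
        intro z
        have h2 := e2 0 z
        rw [hγ0, hβ0, hαδ, hs] at h2
        simp only [zero_mul, mul_zero, zero_add, add_zero] at h2
        field_simp
        linear_combination h2
      refine ⟨δ, t, ?_, heval⟩
      have hpoly : gL = C δ⁻¹ * (fL.comp (C δ * X + C t)) + C (δ⁻¹ * (aL - 1) * t) := by
        apply Polynomial.funext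
        intro z
        simp only [eval_add, eval_mul, eval_C, eval_comp, eval_X]
        rw [heval z]
      have hdeg1 : (C δ * X + C t).natDegree = 1 := natDegree_linear hδ0
      have hcd : (fL.comp (C δ * X + C t)).natDegree = d := by
        rw [natDegree_comp, hdeg1, hfLd, mul_one]
      have hlc : (fL.comp (C δ * X + C t)).coeff d = δ ^ d := by
        have : (fL.comp (C δ * X + C t)).coeff d
            = (fL.comp (C δ * X + C t)).leadingCoeff := by rw [← hcd]; rfl
        rw [this, leadingCoeff_comp (by rw [hdeg1]; exact one_ne_zero),
          hfLm.leadingCoeff, leadingCoeff_linear hδ0, one_mul, hfLd]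
      have h1 : (1 : L) = δ⁻¹ * δ ^ d := by
        calc (1 : L) = gL.coeff gL.natDegree := hgLm.coeff_natDegree.symm
          _ = (C δ⁻¹ * (fL.comp (C δ * X + C t)) + C (δ⁻¹ * (aL - 1) * t)).coeff d := by
              rw [hgLd, ← hpoly]
          _ = δ⁻¹ * δ ^ d := by
              rw [coeff_add, coeff_C_mul, coeff_C, if_neg (by omega), add_zero, hlc]
      have h2 : δ ^ (d - 1) = δ⁻¹ * δ ^ d := by
        rw [show d = (d - 1) + 1 from by omega, pow_succ]
        field_simp
        simp
      rw [h2, ← h1]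
    · rintro ⟨δ, t, hδ1, heval⟩
      have hδ0 : δ ≠ 0 := by
        intro h'
        rw [h', zero_pow (by omega : d - 1 ≠ 0)] at hδ1
        exact zero_ne_one hδ1
      rw [hConj]
      refine ⟨δ, 0, 0, δ, aL * t, t, by simpa using pow_ne_zero 2 hδ0, ?_⟩
      intro P
      simp only [hφ₁, hφ₂]
      have hg' : δ * gL.eval P.2 = fL.eval (δ * P.2 + t) + (aL - 1) * t := by
        rw [heval P.2]
        field_simp
      refine Prod.ext ?_ ?_
      · simp only
        ring
      · simp only [zero_mul, zero_add, mul_zero, add_zero]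
        linear_combination hg'
  · intro ha1 t
    have haL1 : aL = 1 := by rw [haL, ha1, map_one]
    rw [hConj]
    refine ⟨1, 0, 0, 1, t, t, by norm_num, ?_⟩
    intro P
    simp only [hφ₁, haL1]
    refine Prod.ext ?_ ?_
    · simp only
      ring
    · simp only [zero_mul, zero_add, one_mul, add_zero]
      ring
end
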